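/- arXiv:2012.00903 — 10 statements merged into one kernel-verified Lean document; each statement's English description precedes it below -/
import Mathlib

section
/- Let B be a commutative unital C*-algebra and let α : B → B be a positive linear map (i.e. α(b) ≥ 0 whenever b ≥ 0). Then for every b ∈ B one has |α(b)| ≤ α(|b|). -/
/-- The absolute value `(a* a)^{1/2}` of an element of a C*-algebra. -/
noncomputable def cabs {B : Type*} [CStarAlgebra B] [PartialOrder B] [StarOrderedRing B]
    (b : B) : B := CFC.sqrt (star b * b)

section Aux

open WeakDual WeakDual.CharacterSpace Complex ComplexStarModule

variable {B : Type*} [CommCStarAlgebra B] [PartialOrder B] [StarOrderedRing B]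

lemma char_real {a : B} (ha : IsSelfAdjoint a) (φ : characterSpace ℂ B) :
    φ a = ((φ a).re : ℂ) := by
  have h := map_star φ a
  rw [ha.star_eq] at h
  exact (Complex.conj_eq_iff_re.mp h.symm).symm

lemma char_nonneg {a : B} (ha : 0 ≤ a) (φ : characterSpace ℂ B) :
    0 ≤ (φ a).re := by
  have hsa : IsSelfAdjoint a := .of_nonneg ha
  have hmem : (φ a) ∈ spectrum ℂ a := mem_spectrum_iff_exists.mpr ⟨φ, rfl⟩
  rw [char_real hsa φ] at hmem
  have hmem' : (φ a).re ∈ spectrum ℝ a := by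
    rw [← spectrum.algebraMap_mem_iff ℂ]
    simpa using hmem
  exact (StarOrderedRing.nonneg_iff_spectrum_nonneg (R := ℝ) a hsa).mp ha _ hmem'

lemma nonneg_of_char {a : B} (ha : IsSelfAdjoint a)
    (h : ∀ φ : characterSpace ℂ B, 0 ≤ (φ a).re) : 0 ≤ a := by
  rw [StarOrderedRing.nonneg_iff_spectrum_nonneg (R := ℝ) a ha]
  intro x hx
  have hx' : (x : ℂ) ∈ spectrum ℂ a := spectrum.algebraMap_mem ℂ hx
  obtain ⟨φ, hφ⟩ := mem_spectrum_iff_exists.mp hx'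
  have := h φ
  rw [hφ] at this
  simpa using this

lemma le_of_char {a c : B} (ha : IsSelfAdjoint a) (hc : IsSelfAdjoint c)
    (h : ∀ φ : characterSpace ℂ B, (φ a).re ≤ (φ c).re) : a ≤ c := by
  rw [← sub_nonneg]
  refine nonneg_of_char (hc.sub ha) fun φ ↦ ?_
  have := h φ
  simp only [map_sub, Complex.sub_re]
  linarith

lemma char_cabs (φ : characterSpace ℂ B) (x : B) :
    φ (cabs x) = (‖φ x‖ : ℂ) := by
  have h0 : (0 : B) ≤ star x * x := star_mul_self_nonneg x
  have hc : (0 : B) ≤ cabs x := CFC.sqrt_nonneg _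
  have hre := char_real (.of_nonneg hc) φ
  have hnn := char_nonneg hc φ
  have hsq : φ (cabs x) * φ (cabs x) = φ (star x * x) := by
    rw [← map_mul]
    congr 1
    exact CFC.sqrt_mul_sqrt_self _ h0
  rw [map_mul, map_star] at hsq
  set t := (φ (cabs x)).re with ht
  have htsq : (t : ℂ) * t = (‖φ x‖ : ℂ) * (‖φ x‖ : ℂ) := by
    rw [← hre, hsq, Complex.star_def, mul_comm, Complex.mul_conj, ← Complex.sq_norm]
    push_cast
    ring
  have habs : t = ‖φ x‖ := by
    have h2 : t * t = ‖φ x‖ * ‖φ x‖ := by exact_mod_cast htsq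
    nlinarith [norm_nonneg (φ x)]
  rw [hre, habs]

lemma map_isSelfAdjoint'' (α : B →ₗ[ℂ] B) (hα : ∀ b : B, 0 ≤ b → 0 ≤ α b)
    {s : B} (hs : IsSelfAdjoint s) : IsSelfAdjoint (α s) := by
  rw [← CFC.posPart_sub_negPart s hs, map_sub]
  exact (IsSelfAdjoint.of_nonneg (hα _ (CFC.posPart_nonneg s))).sub
    (IsSelfAdjoint.of_nonneg (hα _ (CFC.negPart_nonneg s)))

lemma map_star'' (α : B →ₗ[ℂ] B) (hα : ∀ b : B, 0 ≤ b → 0 ≤ α b) (y : B) :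
    α (star y) = star (α y) := by
  have hy : (ℜ y : B) + Complex.I • (ℑ y : B) = y := realPart_add_I_smul_imaginaryPart y
  have h1 : IsSelfAdjoint (α (ℜ y : B)) := map_isSelfAdjoint'' α hα (ℜ y).2
  have h2 : IsSelfAdjoint (α (ℑ y : B)) := map_isSelfAdjoint'' α hα (ℑ y).2
  calc α (star y) = α (star ((ℜ y : B) + Complex.I • (ℑ y : B))) := by rw [hy]
    _ = α (ℜ y : B) - Complex.I • α (ℑ y : B) := by
        rw [star_add, star_smul, (ℜ y).2.star_eq, (ℑ y).2.star_eq]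
        simp [map_add, map_smul, Complex.star_def, Complex.conj_I, neg_smul, sub_eq_add_neg]
    _ = star (α y) := by
        conv_rhs => rw [← hy]
        rw [map_add, map_smul, star_add, star_smul, h1.star_eq, h2.star_eq]
        simp [Complex.star_def, Complex.conj_I, neg_smul, sub_eq_add_neg]

end Aux

/-- If `B` is a commutative unital C*-algebra and `α : B → B` is a positive linear map,
then `|α(b)| ≤ α(|b|)` for every `b ∈ B`. -/
theorem abs_apply_le_apply_abs_of_positive
    {B : Type*} [CommCStarAlgebra B] [PartialOrder B] [StarOrderedRing B]
    (α : B →ₗ[ℂ] B) (hα : ∀ b : B, 0 ≤ b → 0 ≤ α b) (b : B) :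
    cabs (α b) ≤ α (cabs b) := by
  open WeakDual WeakDual.CharacterSpace in
  refine le_of_char (.of_nonneg (CFC.sqrt_nonneg _))
    (.of_nonneg (hα _ (CFC.sqrt_nonneg _))) fun φ ↦ ?_
  rw [char_cabs]
  set z : ℂ := φ (α b) with hz
  set u : ℂ := if z = 0 then 1 else (starRingEnd ℂ) z / ‖z‖ with hu
  have huz : u * z = (‖z‖ : ℂ) := by
    rcases eq_or_ne z 0 with h | h
    · simp [hu, h]
    · have habs0 : (‖z‖ : ℂ) ≠ 0 := by
        simpa using (norm_ne_zero_iff.mpr h)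
      rw [hu, if_neg h, div_mul_eq_mul_div, mul_comm, Complex.mul_conj, ← Complex.sq_norm]
      push_cast
      field_simp
  have habsu : ‖u‖ = 1 := by
    rcases eq_or_ne z 0 with h | h
    · simp [hu, h]
    · rw [hu, if_neg h]
      simp [norm_div, Complex.norm_conj, div_self (norm_ne_zero_iff.mpr h)]
  set g : B := (2 : ℂ)⁻¹ • (u • b + star (u • b)) with hg
  have hgsa : IsSelfAdjoint g := by
    rw [hg]
    simp only [IsSelfAdjoint, star_smul, star_add, star_star]
    rw [add_comm]
    congr 1
    simp [Complex.star_def, map_inv₀, map_ofNat]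
  have hgle : g ≤ cabs b := by
    refine le_of_char hgsa (.of_nonneg (CFC.sqrt_nonneg _)) fun χ ↦ ?_
    rw [char_cabs]
    have hχ : χ g = (2 : ℂ)⁻¹ * (u * χ b + (starRingEnd ℂ) (u * χ b)) := by
      rw [hg, map_smul, map_add, map_smul, map_star, map_smul]
      simp [smul_eq_mul, Complex.star_def]
    have : χ g = (((u * χ b).re : ℝ) : ℂ) := by
      rw [hχ, Complex.add_conj]
      push_cast
      ring
    rw [this]
    simp only [Complex.ofReal_re]
    calc (u * χ b).re ≤ ‖u * χ b‖ := Complex.re_le_norm _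
      _ = ‖χ b‖ := by rw [norm_mul, habsu, one_mul]
  have hle2 : α g ≤ α (cabs b) := by
    rw [← sub_nonneg, ← map_sub]
    exact hα _ (sub_nonneg.mpr hgle)
  have hφle := char_nonneg (sub_nonneg.mpr hle2) φ
  have hαg : φ (α g) = (‖z‖ : ℂ) := by
    have : α g = (2 : ℂ)⁻¹ • (u • α b + star (u • α b)) := by
      rw [hg, map_smul, map_add, map_smul, map_star'' α hα, map_smul]
    rw [this, map_smul, map_add, map_smul, map_star, smul_eq_mul, map_smul, smul_eq_mul,
      ← hz, huz, Complex.star_def, Complex.conj_ofReal]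
    ring
  rw [map_sub] at hφle
  have := congrArg Complex.re hαg
  simp only [Complex.ofReal_re, Complex.sub_re] at hφle this ⊢
  linarith
end

section
/- Let A be a unital C*-algebra, φ a faithful state on A, and x ∈ A. Then limsup_{n→∞} (φ((x* x)^n))^{1/(2n)} = ‖x‖. -/
open Filter Topology
open scoped ComplexOrder

/-- If `φ` is a faithful state on a unital C*-algebra `A` and `x ∈ A`, then
`limsup_{n → ∞} φ((x* x)ⁿ)^{1/(2n)} = ‖x‖`. -/
theorem limsup_rpow_state_pow_eq_norm
    {A : Type*} [CStarAlgebra A] [PartialOrder A] [StarOrderedRing A]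
    (φ : A →ₗ[ℂ] ℂ) (hpos : ∀ x : A, 0 ≤ x → 0 ≤ φ x) (hone : φ 1 = 1)
    (hfaithful : ∀ x : A, φ (star x * x) = 0 → x = 0)
    (x : A) :
    limsup (fun n : ℕ => (φ ((star x * x) ^ n)).re ^ ((1 : ℝ) / (2 * n))) atTop = ‖x‖ := by
  set a := star x * x with ha_def
  set u : ℕ → ℝ := fun n => (φ (a ^ n)).re ^ ((1 : ℝ) / (2 * n)) with hu_def
  have ha0 : (0 : A) ≤ a := star_mul_self_nonneg x
  have hasa : IsSelfAdjoint a := .of_nonneg ha0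
  have hnormA : ‖a‖ = ‖x‖ * ‖x‖ := CStarRing.norm_star_mul_self
  -- `φ` of a nonneg element is a nonneg real
  have hre : ∀ b : A, 0 ≤ b → φ b = ((φ b).re : ℂ) ∧ 0 ≤ (φ b).re := by
    intro b hb
    have h := hpos b hb
    rw [Complex.le_def] at h
    refine ⟨Complex.ext rfl ?_, by simpa using h.1⟩
    simpa using h.2.symm
  -- value on real scalars
  have halg : ∀ r : ℝ, φ (algebraMap ℝ A r) = (r : ℂ) := by
    intro r
    rw [Algebra.algebraMap_eq_smul_one, LinearMap.map_smul_of_tower, hone]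
    simp [Complex.real_smul]
  have hmono : ∀ b c : A, b ≤ c → (φ b).re ≤ (φ c).re := by
    intro b c hbc
    have h := hpos (c - b) (sub_nonneg.2 hbc)
    rw [Complex.le_def] at h
    have := h.1
    simpa [Complex.sub_re] using this
  have hunn : ∀ n, 0 ≤ (φ (a ^ n)).re := fun n =>
    (hre _ (CStarAlgebra.pow_nonneg ha0 n)).2
  have hupper : ∀ n : ℕ, 1 ≤ n → u n ≤ ‖x‖ := by
    intro n hn
    have hle : (φ (a ^ n)).re ≤ ‖a‖ ^ n := by
      have h1 : a ^ n ≤ algebraMap ℝ A ‖a ^ n‖ :=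
        IsSelfAdjoint.le_algebraMap_norm_self (hasa.pow n)
      have h2 := hmono _ _ h1
      rw [halg] at h2
      simpa using h2.trans (norm_pow_le' a hn)
    have hn' : (n : ℝ) ≠ 0 := by positivity
    calc u n ≤ (‖a‖ ^ n) ^ ((1 : ℝ) / (2 * n)) :=
          Real.rpow_le_rpow (hunn n) hle (by positivity)
      _ = ‖x‖ := by
          rw [hnormA, ← sq, ← pow_mul, ← Real.rpow_natCast ‖x‖ (2 * n),
            ← Real.rpow_mul (norm_nonneg x)]
          push_cast
          rw [show (2:ℝ) * (n:ℝ) * (1/(2*(n:ℝ))) = 1 by field_simp, Real.rpow_one]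
  have hun0 : ∀ n, 0 ≤ u n := fun n => Real.rpow_nonneg (hunn n) _
  have key : Tendsto u atTop (𝓝 ‖x‖) := by
    rw [tendsto_order]
    constructor
    · -- lower bound
      intro c₀ hc₀
      rcases lt_or_ge c₀ 0 with hc | hc
      · exact Eventually.of_forall fun n => hc.trans_le (hun0 n)
      have hx0 : x ≠ 0 := by
        intro h; rw [h, norm_zero] at hc₀; exact absurd (hc.trans_lt hc₀) (lt_irrefl 0)
      haveI : Nontrivial A := nontrivial_of_ne x 0 hx0
      have hxn : 0 < ‖x‖ := norm_pos_iff.2 hx0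
      set s : ℝ := (c₀ + ‖x‖) / 2 with hs_def
      have hs0 : 0 < s := by rw [hs_def]; positivity
      have hcs : c₀ < s := by rw [hs_def]; linarith
      have hsx : s < ‖x‖ := by rw [hs_def]; linarith
      set r : ℝ := s ^ 2 with hr_def
      have hr0 : 0 < r := by positivity
      have hrA : r < ‖a‖ := by
        rw [hnormA, hr_def, sq]
        exact mul_self_lt_mul_self hs0.le hsx
      set f : ℝ → ℝ := fun t => max 0 (min 1 ((t - r) * (‖a‖ - r)⁻¹)) with hf_def
      have hfc : Continuous f := by fun_prop
      have hf0 : ∀ t : ℝ, 0 ≤ f t := fun t => le_max_left _ _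
      have hf1 : ∀ t : ℝ, f t ≤ 1 := fun t => max_le zero_le_one (min_le_left _ _)
      have hfr : ∀ t : ℝ, t ≤ r → f t = 0 := by
        intro t ht
        rw [hf_def]
        have h1 : (t - r) * (‖a‖ - r)⁻¹ ≤ 0 :=
          mul_nonpos_of_nonpos_of_nonneg (by linarith) (inv_nonneg.2 (by linarith))
        exact max_eq_left ((min_le_right _ _).trans h1)
      have hfA : f ‖a‖ = 1 := by
        rw [hf_def]
        simp only []
        rw [mul_inv_cancel₀ (by linarith : ‖a‖ - r ≠ 0), min_self,
          max_eq_right zero_le_one]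
      set b : A := cfc f a with hb_def
      have hbsa : IsSelfAdjoint b := cfc_predicate f a
      have hbne : b ≠ 0 := by
        intro hb0
        have hmem : ‖a‖ ∈ spectrum ℝ a := CStarAlgebra.norm_mem_spectrum_of_nonneg ha0
        have h1 : f ‖a‖ ∈ spectrum ℝ b := by
          rw [hb_def, cfc_map_spectrum f a]
          exact ⟨‖a‖, hmem, rfl⟩
        rw [hb0, hfA] at h1
        simp [spectrum.zero_eq] at h1
      have hbb0 : (0 : A) ≤ b * b := by
        have := star_mul_self_nonneg b
        rwa [hbsa.star_eq] at this
      set c : ℝ := (φ (b * b)).re with hc_def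
      have hc0 : 0 < c := by
        rcases (hre _ hbb0).2.lt_or_eq with h | h
        · exact h
        · exfalso
          apply hbne
          apply hfaithful
          rw [hbsa.star_eq, (hre _ hbb0).1, ← h]
          simp
      -- main inequality
      have hmain : ∀ n : ℕ, r ^ n * c ≤ (φ (a ^ n)).re := by
        intro n
        have hkey : (0 : A) ≤ a ^ n - r ^ n • (b * b) := by
          have h1 : a ^ n = cfc (fun t : ℝ => t ^ n) a := (cfc_pow_id a n).symm
          have h2 : b * b = cfc (fun t => f t * f t) a := (cfc_mul f f a).symm
          have h3 : r ^ n • (b * b) = cfc (fun t => r ^ n • (f t * f t)) a := by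
            rw [h2, ← cfc_smul (r ^ n) (fun t => f t * f t) a]
          rw [h1, h3, ← cfc_sub (fun t : ℝ => t ^ n) (fun t => r ^ n • (f t * f t)) a (by fun_prop) (by fun_prop)]
          apply cfc_nonneg
          intro t ht
          have ht0 : 0 ≤ t := spectrum_nonneg_of_nonneg ha0 ht
          rcases le_or_gt t r with htr | htr
          · rw [hfr t htr]
            simp only [mul_zero, smul_zero, sub_zero]
            positivity
          · have hft : f t * f t ≤ 1 := by nlinarith [hf0 t, hf1 t]
            have h5 : r ^ n ≤ t ^ n := pow_le_pow_left₀ hr0.le htr.le n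
            simp only [smul_eq_mul]
            nlinarith [pow_nonneg hr0.le n]
        have h6 := hpos _ hkey
        rw [Complex.le_def] at h6
        have h7 := h6.1
        rw [map_sub, LinearMap.map_smul_of_tower] at h7
        simp only [Complex.sub_re, Complex.smul_re, Complex.zero_re, smul_eq_mul] at h7
        rw [← hc_def] at h7
        linarith
      have hlow : ∀ n : ℕ, 1 ≤ n → s * c ^ ((1 : ℝ) / (2 * n)) ≤ u n := by
        intro n hn
        have hn' : (n : ℝ) ≠ 0 := by positivity
        have h1 : (r ^ n * c) ^ ((1 : ℝ) / (2 * n)) ≤ u n :=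
          Real.rpow_le_rpow (by positivity) (hmain n) (by positivity)
        refine le_trans (le_of_eq ?_) h1
        rw [Real.mul_rpow (by positivity) hc0.le]
        congr 1
        rw [hr_def, ← pow_mul, ← Real.rpow_natCast s (2 * n),
          ← Real.rpow_mul hs0.le]
        push_cast
        rw [show (2:ℝ) * (n:ℝ) * (1/(2*(n:ℝ))) = 1 by field_simp, Real.rpow_one]
      have h0 : Tendsto (fun n : ℕ => (1 : ℝ) / (2 * n)) atTop (𝓝 0) := by
        have h := tendsto_one_div_atTop_nhds_zero_nat.const_mul (1/2 : ℝ)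
        rw [mul_zero] at h
        exact h.congr fun n => by rw [div_mul_div_comm, one_mul]
      have h1 : Tendsto (fun n : ℕ => c ^ ((1 : ℝ) / (2 * n))) atTop (𝓝 1) := by
        have h2 : Tendsto (fun n : ℕ => Real.exp (Real.log c * ((1 : ℝ) / (2 * n))))
            atTop (𝓝 1) := by
          have h3 := h0.const_mul (Real.log c)
          rw [mul_zero] at h3
          simpa [Function.comp_def] using (Real.continuous_exp.tendsto 0).comp h3
        exact h2.congr fun n => (Real.rpow_def_of_pos hc0 _).symm
      have hv : Tendsto (fun n : ℕ => s * c ^ ((1 : ℝ) / (2 * n))) atTop (𝓝 s) := by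
        have := h1.const_mul s
        rwa [mul_one] at this
      filter_upwards [eventually_ge_atTop 1, hv.eventually_const_lt hcs] with n hn h
      exact h.trans_le (hlow n hn)
    · -- upper bound
      intro c₀ hc₀
      filter_upwards [eventually_ge_atTop 1] with n hn
      exact (hupper n hn).trans_lt hc₀
  exact key.limsup_eq
end

section
/- Let A be a unital C*-algebra, B ⊆ A a unital C*-subalgebra, and E : A → B a faithful conditional expectation onto B. Then for every x ∈ A, limsup_{n→∞} ‖E((x* x)^n)‖^{1/(2n)} = ‖x‖. -/
open Filter

/-- `E : A → A` is a conditional expectation onto the C*-subalgebra `B`: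
it takes values in `B`, fixes `B`, is a `B`-bimodule map, and is positive and contractive. -/
structure IsCondExp {A : Type*} [CStarAlgebra A] [PartialOrder A] [StarOrderedRing A]
    (B : StarSubalgebra ℂ A) (E : A →ₗ[ℂ] A) : Prop where
  mem_range : ∀ x : A, E x ∈ B
  fixes : ∀ b ∈ B, E b = b
  bimodule : ∀ b₁ ∈ B, ∀ b₂ ∈ B, ∀ x : A, E (b₁ * x * b₂) = b₁ * E x * b₂
  positive : ∀ x : A, 0 ≤ x → 0 ≤ E x
  contractive : ∀ x : A, ‖E x‖ ≤ ‖x‖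

private lemma aux_rpow_cancel {c : ℝ} (hc : 0 ≤ c) {n : ℕ} (hn : 1 ≤ n) :
    (c ^ (2 * n)) ^ ((1 : ℝ) / (2 * n)) = c := by
  have h2n : ((2 * n : ℕ) : ℝ) ≠ 0 := by
    have : (0:ℕ) < 2 * n := by omega
    exact_mod_cast this.ne'
  rw [← Real.rpow_natCast c (2 * n), ← Real.rpow_mul hc,
    show ((2 * n : ℕ) : ℝ) = 2 * (n : ℝ) by push_cast; ring,
    mul_one_div_cancel (by push_cast at h2n; exact h2n), Real.rpow_one]

/-- If `E` is a faithful conditional expectation from a unital C*-algebra `A` onto a unital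
C*-subalgebra `B`, then for every `x ∈ A`,
`limsup_{n → ∞} ‖E((x* x)ⁿ)‖^{1/(2n)} = ‖x‖`. -/
theorem limsup_rpow_norm_condexp_pow_eq_norm
    {A : Type*} [CStarAlgebra A] [PartialOrder A] [StarOrderedRing A]
    (B : StarSubalgebra ℂ A) (hBclosed : IsClosed (B : Set A))
    (E : A →ₗ[ℂ] A) (hE : IsCondExp B E)
    (hfaithful : ∀ x : A, E (star x * x) = 0 → x = 0)
    (x : A) :
    limsup (fun n : ℕ => ‖E ((star x * x) ^ n)‖ ^ ((1 : ℝ) / (2 * n))) atTop = ‖x‖ := by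
  by_cases hx0 : x = 0
  · subst hx0
    have h1 : ∀ᶠ n : ℕ in atTop,
        ‖E ((star (0:A) * 0) ^ n)‖ ^ ((1 : ℝ) / (2 * n)) = (0 : ℝ) := by
      filter_upwards [eventually_ge_atTop 1] with n hn
      have hz : (star (0:A) * 0) ^ n = 0 := by
        rw [mul_zero, zero_pow (by omega : n ≠ 0)]
      have hne : (1 : ℝ) / (2 * n) ≠ 0 := by
        have : (0:ℝ) < (n:ℝ) := by exact_mod_cast hn
        positivity
      rw [hz, map_zero, norm_zero, Real.zero_rpow hne]
    rw [limsup_congr h1, limsup_const, norm_zero]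
  · set a : A := star x * x with ha_def
    have ha : (0:A) ≤ a := star_mul_self_nonneg x
    have haSA : IsSelfAdjoint a := .of_nonneg ha
    have hx : 0 < ‖x‖ := norm_pos_iff.mpr hx0
    haveI : Nontrivial A := nontrivial_of_ne x 0 hx0
    have hnormA : ‖a‖ = ‖x‖ * ‖x‖ := CStarRing.norm_star_mul_self
    have hapos : 0 < ‖a‖ := by rw [hnormA]; positivity
    set F : ℕ → ℝ := fun n => ‖E (a ^ n)‖ ^ ((1 : ℝ) / (2 * n)) with hF
    -- upper bound
    have hub : ∀ᶠ n : ℕ in atTop, F n ≤ ‖x‖ := by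
      filter_upwards [eventually_ge_atTop 1] with n hn
      have h1 : ‖E (a ^ n)‖ ≤ ‖x‖ ^ (2 * n) := by
        calc ‖E (a ^ n)‖ ≤ ‖a ^ n‖ := hE.contractive _
          _ ≤ ‖a‖ ^ n := norm_pow_le' a (by omega)
          _ = ‖x‖ ^ (2 * n) := by rw [hnormA, ← sq, two_mul, ← pow_mul, two_mul]
      calc F n ≤ (‖x‖ ^ (2 * n)) ^ ((1 : ℝ) / (2 * n)) :=
            Real.rpow_le_rpow (norm_nonneg _) h1 (by positivity)
        _ = ‖x‖ := aux_rpow_cancel (norm_nonneg x) hn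
    have hcb : IsCoboundedUnder (· ≤ ·) atTop F :=
      isCoboundedUnder_le_of_le atTop fun n => Real.rpow_nonneg (norm_nonneg _) _
    have hbdd : IsBoundedUnder (· ≤ ·) atTop F := ⟨‖x‖, by simpa [eventually_map] using hub⟩
    have hle : limsup F atTop ≤ ‖x‖ := limsup_le_of_le hcb hub
    -- lower bound
    have hlow : ∀ m : ℝ, 0 < m → m < ‖x‖ → m ≤ limsup F atTop := by
      intro m hm0 hmx
      set μ : ℝ := m ^ 2 with hμdef
      have hμ0 : 0 < μ := by positivity
      have hμa : μ < ‖a‖ := by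
        rw [hnormA, hμdef, sq]
        exact mul_lt_mul'' hmx hmx hm0.le hm0.le
      set g : ℝ → ℝ := fun t => (‖a‖ - μ)⁻¹ * ((t - μ) ⊔ 0) with hgdef
      have hgc : Continuous g :=
        continuous_const.mul ((continuous_id.sub continuous_const).max continuous_const)
      have hg0 : ∀ t, 0 ≤ g t := fun t =>
        mul_nonneg (inv_nonneg.2 (by linarith)) (le_max_right _ _)
      have hg1 : ∀ t, t ≤ ‖a‖ → g t ≤ 1 := by
        intro t ht
        have h1 : (t - μ) ⊔ 0 ≤ ‖a‖ - μ := max_le (by linarith) (by linarith)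
        calc g t ≤ (‖a‖ - μ)⁻¹ * (‖a‖ - μ) :=
              mul_le_mul_of_nonneg_left h1 (inv_nonneg.2 (by linarith))
          _ = 1 := inv_mul_cancel₀ (by linarith)
      have hga : g ‖a‖ = 1 := by
        rw [hgdef]
        simp only [max_eq_left (by linarith : (0:ℝ) ≤ ‖a‖ - μ)]
        exact inv_mul_cancel₀ (by linarith)
      set b : A := cfc g a with hbdef
      have hb0 : (0:A) ≤ b := cfc_nonneg fun t _ => hg0 t
      have hbne : b ≠ 0 := by
        intro h
        have hmem : ‖a‖ ∈ spectrum ℝ a := CStarAlgebra.norm_mem_spectrum_of_nonneg ha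
        have h2 := norm_apply_le_norm_cfc g a hmem hgc.continuousOn haSA
        rw [← hbdef, h, norm_zero, hga] at h2
        rw [norm_one] at h2
        linarith
      have hEbne : E b ≠ 0 := by
        intro h
        set y : A := cfc (fun t => Real.sqrt (g t)) a with hydef
        have hysa : IsSelfAdjoint y := cfc_predicate _ a
        have hyy : star y * y = b := by
          rw [hysa.star_eq, hydef,
            ← cfc_mul (fun t => Real.sqrt (g t)) (fun t => Real.sqrt (g t)) a
              (Real.continuous_sqrt.comp hgc).continuousOn
              (Real.continuous_sqrt.comp hgc).continuousOn]
          exact cfc_congr fun t _ => Real.mul_self_sqrt (hg0 t)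
        have hy0 : y = 0 := hfaithful y (by rw [hyy]; exact h)
        exact hbne (by rw [← hyy, hy0, mul_zero])
      have hK : 0 < ‖E b‖ := norm_pos_iff.mpr hEbne
      have hkey : ∀ n : ℕ, μ ^ n * ‖E b‖ ≤ ‖E (a ^ n)‖ := by
        intro n
        have hle1 : cfc (fun t => μ ^ n * g t) a ≤ a ^ n := by
          rw [← cfc_pow_id (R := ℝ) a n haSA]
          refine cfc_mono (fun t ht => ?_) (continuous_const.mul hgc).continuousOn
            (continuous_pow n).continuousOn
          have ht0 : 0 ≤ t := spectrum_nonneg_of_nonneg ha ht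
          rcases le_or_gt t μ with htμ | htμ
          · have hgt : g t = 0 := by
              rw [hgdef]
              simp [max_eq_right (by linarith : t - μ ≤ 0)]
            rw [hgt, mul_zero]
            positivity
          · have h1 : g t ≤ 1 := hg1 t ((Real.le_norm_self t).trans
              (spectrum.norm_le_norm_of_mem ht))
            calc μ ^ n * g t ≤ μ ^ n * 1 :=
                  mul_le_mul_of_nonneg_left h1 (by positivity)
              _ = μ ^ n := mul_one _
              _ ≤ t ^ n := pow_le_pow_left₀ hμ0.le htμ.le n
        have hcfc0 : (0:A) ≤ cfc (fun t => μ ^ n * g t) a :=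
          cfc_nonneg fun t _ => mul_nonneg (by positivity) (hg0 t)
        have hEle : E (cfc (fun t => μ ^ n * g t) a) ≤ E (a ^ n) := by
          have h2 := hE.positive _ (sub_nonneg.mpr hle1)
          rw [map_sub] at h2
          exact sub_nonneg.mp h2
        have hnle : ‖E (cfc (fun t => μ ^ n * g t) a)‖ ≤ ‖E (a ^ n)‖ :=
          CStarAlgebra.norm_le_norm_of_nonneg_of_le (hE.positive _ hcfc0) hEle
        have h1 : cfc (fun t => μ ^ n * g t) a = (μ ^ n : ℝ) • b :=
          cfc_const_mul _ g a hgc.continuousOn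
        have h2 : E ((μ ^ n : ℝ) • b) = (μ ^ n : ℝ) • E b :=
          E.map_smul_of_tower _ b
        rw [h1, h2, norm_smul, Real.norm_eq_abs, abs_of_pos (pow_pos hμ0 n)] at hnle
        exact hnle
      set G : ℕ → ℝ := fun n => m * ‖E b‖ ^ ((1 : ℝ) / (2 * n)) with hGdef
      have hGt : Tendsto G atTop (nhds m) := by
        have h1 : Tendsto (fun n : ℕ => (1:ℝ) / (2 * n)) atTop (nhds 0) := by
          have h := tendsto_const_div_atTop_nhds_zero_nat ((1:ℝ)/2)
          refine h.congr fun n => ?_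
          rw [div_div]
        have h2 : ContinuousAt (fun e : ℝ => ‖E b‖ ^ e) 0 :=
          Real.continuousAt_const_rpow hK.ne'
        have h3 := (h2.tendsto.comp h1)
        rw [Real.rpow_zero] at h3
        have h4 := tendsto_const_nhds (x := m) (f := atTop (α := ℕ)) |>.mul h3
        rw [mul_one] at h4
        exact h4
      have hGF : ∀ᶠ n : ℕ in atTop, G n ≤ F n := by
        filter_upwards [eventually_ge_atTop 1] with n hn
        have h1 : (μ ^ n * ‖E b‖) ^ ((1 : ℝ) / (2 * n)) ≤ F n :=
          Real.rpow_le_rpow (by positivity) (hkey n) (by positivity)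
        have h2 : (μ ^ n * ‖E b‖) ^ ((1 : ℝ) / (2 * n)) = G n := by
          rw [Real.mul_rpow (by positivity) hK.le]
          congr 1
          have hμn : μ ^ n = m ^ (2 * n) := by
            rw [hμdef, ← pow_mul]
          rw [hμn]
          exact aux_rpow_cancel hm0.le hn
        rw [← h2]
        exact h1
      have h5 : limsup G atTop ≤ limsup F atTop :=
        limsup_le_limsup hGF (hGt.isBoundedUnder_ge.isCoboundedUnder_le) hbdd
      rwa [hGt.limsup_eq] at h5
    refine le_antisymm hle (le_of_forall_lt_imp_le_of_dense fun y hy => ?_)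
    rcases le_or_gt y 0 with hy0 | hy0
    · exact hy0.trans ((hlow (‖x‖/2) (by positivity) (by linarith)).trans'
        (by positivity))
    · exact hlow y hy0 hy
end

section
/- Let A be a unital C*-algebra, B ⊆ A a unital C*-subalgebra, and E : A → B a faithful conditional expectation onto B. Let W, V ∈ A and m ≥ 0 be such that E((W* W)^n) ≤ m^{2n} E((V* V)^n) in the C*-order of B for every n ≥ 1. Then ‖W‖ ≤ m ‖V‖. -/
open Filter

/-- Key auxiliary lemma: if `E` is a faithful positive linear map and `a ≥ 0` satisfies
`‖E (aⁿ)‖ ≤ rⁿ` for all `n ≥ 1`, then `‖a‖ ≤ r`. -/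
lemma norm_le_of_norm_map_pow_le
    {A : Type*} [CStarAlgebra A] [PartialOrder A] [StarOrderedRing A]
    (E : A →ₗ[ℂ] A) (hpos : ∀ x : A, 0 ≤ x → 0 ≤ E x)
    (hfaithful : ∀ x : A, E (star x * x) = 0 → x = 0)
    (a : A) (ha : 0 ≤ a) (r : ℝ) (hr : 0 ≤ r)
    (hbound : ∀ n : ℕ, 1 ≤ n → ‖E (a ^ n)‖ ≤ r ^ n) : ‖a‖ ≤ r := by
  by_contra hlt
  push_neg at hlt
  set t : ℝ := ‖a‖ with ht
  have ht0 : 0 < t := lt_of_le_of_lt hr hlt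
  have hane : a ≠ 0 := fun h0 => by simp [ht, h0] at ht0
  have : Nontrivial A := nontrivial_of_ne a 0 hane
  have hsa : IsSelfAdjoint a := .of_nonneg ha
  set s : ℝ := (r + t) / 2 with hs
  have hrs : r < s := by rw [hs]; linarith
  have hst : s < t := by rw [hs]; linarith
  have hs0 : 0 < s := lt_of_le_of_lt hr hrs
  have hts : 0 < t - s := by linarith
  -- the bump function
  set g : ℝ → ℝ := fun x => 0 ⊔ (1 ⊓ ((x - s) * (t - s)⁻¹)) with hg
  have hgcont : Continuous g :=
    continuous_const.max
      (continuous_const.min ((continuous_id.sub continuous_const).mul continuous_const))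
  have hg0 : ∀ x, 0 ≤ g x := fun x => le_max_left _ _
  have hg1 : ∀ x, g x ≤ 1 := fun x => sup_le zero_le_one (min_le_left _ _)
  have hgt : g t = 1 := by
    rw [hg]
    simp only [mul_inv_cancel₀ hts.ne']
    simp
  have htmem : t ∈ spectrum ℝ a := CStarAlgebra.norm_mem_spectrum_of_nonneg ha
  set b : A := cfc g a with hb
  have hb0 : 0 ≤ b := cfc_nonneg fun x _ => hg0 x
  have hbne : b ≠ 0 := by
    intro h0
    have h1 : (1 : ℝ) ∈ spectrum ℝ b := by
      rw [hb, cfc_map_spectrum (a := a) (f := g) hsa hgcont.continuousOn]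
      exact ⟨t, htmem, hgt⟩
    rw [h0] at h1
    simp [spectrum.zero_eq] at h1
  -- the square root of the bump, used for faithfulness
  have hEbne : E b ≠ 0 := by
    intro hEb
    set q : ℝ → ℝ := fun x => Real.sqrt (g x) with hq
    have hqcont : Continuous q := Real.continuous_sqrt.comp hgcont
    set c : A := cfc q a with hc
    have hcsa : IsSelfAdjoint c := cfc_predicate q a
    have hcc : star c * c = b := by
      rw [hcsa.star_eq, hc, ← cfc_mul q q a hqcont.continuousOn hqcont.continuousOn]
      exact cfc_congr fun x _ => Real.mul_self_sqrt (hg0 x)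
    have := hfaithful c (by rw [hcc]; exact hEb)
    rw [this] at hcc
    exact hbne (by rw [← hcc]; simp)
  have hEb0 : 0 ≤ E b := hpos b hb0
  have hEbpos : 0 < ‖E b‖ := norm_pos_iff.mpr hEbne
  -- the key estimate : sⁿ ‖E b‖ ≤ rⁿ for all n ≥ 1
  have hkey : ∀ n : ℕ, 1 ≤ n → s ^ n * ‖E b‖ ≤ r ^ n := by
    intro n hn
    have hspec : ∀ x ∈ spectrum ℝ a, 0 ≤ x := fun x hx => spectrum_nonneg_of_nonneg ha hx
    have hle : cfc (fun x => s ^ n * g x) a ≤ a ^ n := by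
      rw [← cfc_pow_id (R := ℝ) a n]
      refine cfc_mono ?_ ((continuous_const.mul hgcont).continuousOn)
        ((continuous_pow n).continuousOn)
      intro x hx
      rcases le_or_gt x s with hxs | hxs
      · have hy : (x - s) * (t - s)⁻¹ ≤ 0 :=
          mul_nonpos_of_nonpos_of_nonneg (sub_nonpos.2 hxs) (inv_nonneg.2 hts.le)
        have hgx : g x = 0 := by
          rw [hg]
          exact sup_eq_left.mpr (le_trans (min_le_right _ _) hy)
        rw [hgx, mul_zero]
        exact pow_nonneg (hspec x hx) n
      · calc s ^ n * g x ≤ s ^ n * 1 :=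
              mul_le_mul_of_nonneg_left (hg1 x) (pow_nonneg hs0.le n)
          _ = s ^ n := mul_one _
          _ ≤ x ^ n := pow_le_pow_left₀ hs0.le hxs.le n
    have hsmul : cfc (fun x => s ^ n * g x) a = (s ^ n) • b :=
      cfc_const_mul (s ^ n) g a hgcont.continuousOn
    have hsb0 : (0 : A) ≤ (s ^ n) • b := by
      rw [← hsmul]
      exact cfc_nonneg fun x _ => mul_nonneg (pow_nonneg hs0.le n) (hg0 x)
    rw [hsmul] at hle
    have hEsb : E ((s ^ n) • b) = (s ^ n) • E b := by
      rw [← Complex.coe_smul, map_smul, Complex.coe_smul]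
    have hmono : E ((s ^ n) • b) ≤ E (a ^ n) := by
      have := hpos _ (sub_nonneg.mpr hle)
      rw [map_sub] at this
      exact sub_nonneg.mp this
    have hnorm : ‖E ((s ^ n) • b)‖ ≤ ‖E (a ^ n)‖ :=
      CStarAlgebra.norm_le_norm_of_nonneg_of_le (hpos _ hsb0) hmono
    calc s ^ n * ‖E b‖ = ‖E ((s ^ n) • b)‖ := by
          rw [hEsb, norm_smul, Real.norm_eq_abs, abs_of_nonneg (pow_nonneg hs0.le n)]
      _ ≤ ‖E (a ^ n)‖ := hnorm
      _ ≤ r ^ n := hbound n hn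
  -- derive the contradiction
  have hdiv : (0 : ℝ) ≤ r / s := div_nonneg hr hs0.le
  have hdiv1 : r / s < 1 := (div_lt_one hs0).mpr hrs
  have htend : Tendsto (fun n : ℕ => (r / s) ^ n) atTop (nhds 0) :=
    tendsto_pow_atTop_nhds_zero_of_lt_one hdiv hdiv1
  have hev : ∀ᶠ n : ℕ in atTop, (r / s) ^ n < ‖E b‖ :=
    htend.eventually (Filter.Tendsto.eventually_lt_const hEbpos tendsto_id) |>.mono fun n hn => hn
  obtain ⟨n, hn1, hn2⟩ := (hev.and (eventually_ge_atTop 1)).exists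
  have := hkey n hn2
  have hcle : ‖E b‖ ≤ (r / s) ^ n := by
    rw [div_pow]
    rw [le_div_iff₀ (pow_pos hs0 n)]
    linarith [hkey n hn2]
  exact absurd hcle (not_le.mpr hn1)

/-- If `E` is a faithful conditional expectation from a unital C*-algebra `A` onto a unital
C*-subalgebra `B`, and `W, V ∈ A`, `m ≥ 0` satisfy `E((W* W)ⁿ) ≤ m^{2n} E((V* V)ⁿ)` for all
`n ≥ 1`, then `‖W‖ ≤ m ‖V‖`. -/
theorem norm_le_of_condexp_pow_le
    {A : Type*} [CStarAlgebra A] [PartialOrder A] [StarOrderedRing A]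
    (B : StarSubalgebra ℂ A) (hBclosed : IsClosed (B : Set A))
    (E : A →ₗ[ℂ] A) (hE : IsCondExp B E)
    (hfaithful : ∀ x : A, E (star x * x) = 0 → x = 0)
    (W V : A) (m : ℝ) (hm : 0 ≤ m)
    (h : ∀ n : ℕ, 1 ≤ n →
      E ((star W * W) ^ n) ≤ ((m : ℂ) ^ (2 * n)) • E ((star V * V) ^ n)) :
    ‖W‖ ≤ m * ‖V‖ := by
  set a : A := star W * W with ha
  set c : A := star V * V with hc
  have ha0 : 0 ≤ a := star_mul_self_nonneg W
  have hc0 : 0 ≤ c := star_mul_self_nonneg V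
  set r : ℝ := m ^ 2 * ‖V‖ ^ 2 with hrdef
  have hr0 : 0 ≤ r := by positivity
  have hbound : ∀ n : ℕ, 1 ≤ n → ‖E (a ^ n)‖ ≤ r ^ n := by
    intro n hn
    have hEan0 : 0 ≤ E (a ^ n) := hE.positive _ (CStarAlgebra.pow_nonneg ha0 n)
    have hsmul : ((m : ℂ) ^ (2 * n)) • E (c ^ n) = (m ^ (2 * n) : ℝ) • E (c ^ n) := by
      rw [← Complex.coe_smul]
      norm_num
    have h1 : ‖E (a ^ n)‖ ≤ ‖((m : ℂ) ^ (2 * n)) • E (c ^ n)‖ :=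
      CStarAlgebra.norm_le_norm_of_nonneg_of_le hEan0 (h n hn)
    calc ‖E (a ^ n)‖ ≤ ‖((m : ℂ) ^ (2 * n)) • E (c ^ n)‖ := h1
      _ = m ^ (2 * n) * ‖E (c ^ n)‖ := by
          rw [hsmul, norm_smul, Real.norm_eq_abs, abs_of_nonneg (pow_nonneg hm _)]
      _ ≤ m ^ (2 * n) * ‖c ^ n‖ :=
          mul_le_mul_of_nonneg_left (hE.contractive _) (pow_nonneg hm _)
      _ ≤ m ^ (2 * n) * ‖c‖ ^ n :=
          mul_le_mul_of_nonneg_left (norm_pow_le' c (lt_of_lt_of_le one_pos hn))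
            (pow_nonneg hm _)
      _ = r ^ n := by
          rw [hrdef, hc, CStarRing.norm_star_mul_self, mul_pow, pow_mul]; ring
  have hfinal : ‖a‖ ≤ r := norm_le_of_norm_map_pow_le E hE.positive hfaithful a ha0 r hr0 hbound
  have hWsq : ‖W‖ ^ 2 ≤ (m * ‖V‖) ^ 2 := by
    rw [sq, ← CStarRing.norm_star_mul_self (x := W)]
    calc ‖star W * W‖ ≤ r := hfinal
      _ = (m * ‖V‖) ^ 2 := by rw [hrdef]; ring
  calc ‖W‖ = √(‖W‖ ^ 2) := by rw [Real.sqrt_sq (norm_nonneg W)]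
    _ ≤ √((m * ‖V‖) ^ 2) := Real.sqrt_le_sqrt hWsq
    _ = m * ‖V‖ := Real.sqrt_sq (by positivity)
end

section
/- Let A be a unital C*-algebra, B ⊆ A a commutative unital C*-subalgebra, and E : A → B a conditional expectation onto B. Let T ∈ A satisfy E(b₀ T b₁ T b₂ ⋯ T b_p) = 0 for every p ≥ 1 and all b₀, b₁, …, b_p ∈ B (as holds for any B-valued circular element). Let b ∈ B and set Z = b + T. Then for every n ≥ 1, E((Z^n)* Z^n) ≥ (b^n)* b^n in the C*-order of B. -/
open Filter

section Aux

open ComplexStarModule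

variable {A : Type*} [CStarAlgebra A] [PartialOrder A] [StarOrderedRing A]
    {B : StarSubalgebra ℂ A} {E : A →ₗ[ℂ] A}

/-- A conditional expectation maps selfadjoint elements to selfadjoint elements. -/
lemma IsCondExp.isSelfAdjoint (hE : IsCondExp B E) {x : A} (hx : IsSelfAdjoint x) :
    IsSelfAdjoint (E x) := by
  have hdec : E x = E x⁺ - E x⁻ := by
    rw [← map_sub, CFC.posPart_sub_negPart x hx]
  rw [hdec]
  exact ((IsSelfAdjoint.of_nonneg (hE.positive _ (CFC.posPart_nonneg x))).sub
    (IsSelfAdjoint.of_nonneg (hE.positive _ (CFC.negPart_nonneg x))))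

/-- A conditional expectation is star-preserving. -/
lemma IsCondExp.map_star (hE : IsCondExp B E) (x : A) : E (star x) = star (E x) := by
  have hx : x = (ℜ x : A) + Complex.I • (ℑ x : A) :=
    (realPart_add_I_smul_imaginaryPart x).symm
  have hsx : star x = (ℜ x : A) - Complex.I • (ℑ x : A) := by
    conv_lhs => rw [hx]
    rw [star_add, star_smul, (ℜ x).2, (ℑ x).2]
    simp [sub_eq_add_neg]
  have hre : IsSelfAdjoint (E (ℜ x : A)) := hE.isSelfAdjoint (ℜ x).2
  have him : IsSelfAdjoint (E (ℑ x : A)) := hE.isSelfAdjoint (ℑ x).2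
  conv_rhs => rw [hx]
  rw [hsx, map_sub, map_smul, map_add, map_smul, star_add, star_smul, hre.star_eq,
    him.star_eq]
  simp [sub_eq_add_neg]

end Aux

/-- Let `E` be a conditional expectation from a unital C*-algebra `A` onto a commutative unital
C*-subalgebra `B`, and let `T ∈ A` be such that `E(b₀ T b₁ T b₂ ⋯ T bₚ) = 0` for all `p ≥ 1`
and `b₀, …, bₚ ∈ B` (as holds for any `B`-valued circular element).  Then for `b ∈ B` and
`Z = b + T`, we have `E((Zⁿ)* Zⁿ) ≥ (bⁿ)* bⁿ` for all `n ≥ 1`. -/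
theorem star_pow_mul_pow_le_condexp
    {A : Type*} [CStarAlgebra A] [PartialOrder A] [StarOrderedRing A]
    (B : StarSubalgebra ℂ A) (hBclosed : IsClosed (B : Set A))
    (hBcomm : ∀ x ∈ B, ∀ y ∈ B, x * y = y * x)
    (E : A →ₗ[ℂ] A) (hE : IsCondExp B E)
    (T : A)
    (hT : ∀ b₀ ∈ B, ∀ l : List A, l ≠ [] → (∀ c ∈ l, c ∈ B) →
      E (b₀ * (l.map (fun c => T * c)).prod) = 0)
    (b : A) (hb : b ∈ B) (n : ℕ) (hn : 1 ≤ n) :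
    star (b ^ n) * b ^ n ≤ E (star ((b + T) ^ n) * (b + T) ^ n) := by
  -- Key lemma 2: words starting with a power of (b+T) and containing T's afterwards vanish.
  have K2 : ∀ m : ℕ, ∀ b₀ ∈ B, ∀ b₁ ∈ B, ∀ l : List A, l ≠ [] → (∀ c ∈ l, c ∈ B) →
      E (b₀ * (b + T) ^ m * (b₁ * (l.map (fun c => T * c)).prod)) = 0 := by
    intro m
    induction m with
    | zero =>
      intro b₀ hb₀ b₁ hb₁ l hl hlB
      have := hT (b₀ * b₁) (mul_mem hb₀ hb₁) l hl hlB
      rw [show b₀ * (b + T) ^ 0 * (b₁ * (l.map (fun c => T * c)).prod)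
          = (b₀ * b₁) * (l.map (fun c => T * c)).prod by rw [pow_zero]; noncomm_ring]
      exact this
    | succ m ih =>
      intro b₀ hb₀ b₁ hb₁ l hl hlB
      have hsplit : b₀ * (b + T) ^ (m + 1) * (b₁ * (l.map (fun c => T * c)).prod)
          = b₀ * (b + T) ^ m * ((b * b₁) * (l.map (fun c => T * c)).prod)
            + b₀ * (b + T) ^ m * ((1 : A) * ((b₁ :: l).map (fun c => T * c)).prod) := by
        rw [List.map_cons, List.prod_cons, pow_succ]
        noncomm_ring
      rw [hsplit, map_add, ih b₀ hb₀ (b * b₁) (mul_mem hb hb₁) l hl hlB,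
        ih b₀ hb₀ 1 (one_mem B) (b₁ :: l) (by simp) (by
          intro c hc
          rcases List.mem_cons.mp hc with h | h
          · exact h ▸ hb₁
          · exact hlB c h), add_zero]
  -- Key lemma 1: E(b₀ (b+T)^m) = b₀ b^m.
  have K1 : ∀ m : ℕ, ∀ b₀ ∈ B, E (b₀ * (b + T) ^ m) = b₀ * b ^ m := by
    intro m
    induction m with
    | zero => intro b₀ hb₀; simpa using hE.fixes b₀ hb₀
    | succ m ih =>
      intro b₀ hb₀
      have hsplit : b₀ * (b + T) ^ (m + 1)
          = (b₀ * (b + T) ^ m) * b + b₀ * (b + T) ^ m * ((1 : A) * (([1] : List A).map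
            (fun c => T * c)).prod) := by
        simp only [List.map_cons, List.map_nil, List.prod_cons, List.prod_nil]
        rw [pow_succ]; noncomm_ring
      have hbim : E ((b₀ * (b + T) ^ m) * b) = E (b₀ * (b + T) ^ m) * b := by
        have := hE.bimodule 1 (one_mem B) b hb (b₀ * (b + T) ^ m)
        simpa using this
      have hzero : E (b₀ * (b + T) ^ m * ((1 : A) * (([1] : List A).map
          (fun c => T * c)).prod)) = 0 :=
        K2 m b₀ hb₀ 1 (one_mem B) [1] (by simp) (by simpa using one_mem B)
      rw [hsplit, map_add, hbim, ih b₀ hb₀, hzero, add_zero, pow_succ, mul_assoc]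
  set Zn := (b + T) ^ n with hZn
  set bn := b ^ n with hbn
  have hbnB : bn ∈ B := pow_mem hb n
  set S := Zn - bn with hS
  -- E S = 0
  have hES : E S = 0 := by
    have h1 : E Zn = bn := by simpa using K1 n 1 (one_mem B)
    rw [hS, map_sub, h1, hE.fixes bn hbnB, sub_self]
  have hESstar : E (star S) = 0 := by rw [hE.map_star, hES, star_zero]
  -- cross terms
  have hcross1 : E (star bn * S) = 0 := by
    have h1 : E (star bn * Zn) = star bn * bn := K1 n (star bn) (star_mem hbnB)
    rw [hS, mul_sub, map_sub, h1, hE.fixes _ (mul_mem (star_mem hbnB) hbnB), sub_self]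
  have hcross2 : E (star S * bn) = 0 := by
    have := hE.bimodule 1 (one_mem B) bn hbnB (star S)
    simp only [one_mul] at this
    rw [this, hESstar, zero_mul]
  have hexpand : star Zn * Zn
      = star bn * bn + (star bn * S + (star S * bn + star S * S)) := by
    have : Zn = bn + S := by rw [hS]; abel
    rw [this, star_add]; noncomm_ring
  have hEeq : E (star Zn * Zn) = star bn * bn + E (star S * S) := by
    rw [hexpand, map_add, map_add, map_add, hcross1, hcross2,
      hE.fixes _ (mul_mem (star_mem hbnB) hbnB), zero_add, zero_add]
  rw [hEeq]
  exact le_add_of_nonneg_right (hE.positive _ (star_mul_self_nonneg S))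
end

section
/- Let A be a unital C*-algebra, B ⊆ A a commutative unital C*-subalgebra, and E : A → B a conditional expectation onto B. Let T ∈ A satisfy E(b₀ T b₁ T b₂ ⋯ T b_p) = 0 for every p ≥ 1 and all b₀, b₁, …, b_p ∈ B (as holds for any B-valued circular element). Let b ∈ B be invertible and suppose b^{-1} T is quasinilpotent. Then Z = b + T is invertible in A, and for every n ≥ 1, E((Z^{-n})* Z^{-n}) ≥ (b^{-n})* b^{-n} in the C*-order of B. -/
open Filter
open Topology

/-- Let `E` be a conditional expectation from a unital C*-algebra `A` onto a commutative unital
C*-subalgebra `B`, and let `T ∈ A` be such that `E(b₀ T b₁ T b₂ ⋯ T bₚ) = 0` for all `p ≥ 1`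
and `b₀, …, bₚ ∈ B`.  Let `b ∈ B` be invertible, with inverse `b' ∈ B`, and suppose `b⁻¹ T` is
quasinilpotent (vanishing spectral radius).  Then `Z = b + T` is invertible and
`E((Z⁻ⁿ)* Z⁻ⁿ) ≥ (b⁻ⁿ)* b⁻ⁿ` for all `n ≥ 1`. -/
theorem isUnit_add_and_star_pow_inv_mul_pow_inv_le_condexp
    {A : Type*} [CStarAlgebra A] [PartialOrder A] [StarOrderedRing A]
    (B : StarSubalgebra ℂ A) (hBclosed : IsClosed (B : Set A))
    (hBcomm : ∀ x ∈ B, ∀ y ∈ B, x * y = y * x)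
    (E : A →ₗ[ℂ] A) (hE : IsCondExp B E)
    (T : A)
    (hT : ∀ b₀ ∈ B, ∀ l : List A, l ≠ [] → (∀ c ∈ l, c ∈ B) →
      E (b₀ * (l.map (fun c => T * c)).prod) = 0)
    (b b' : A) (hb : b ∈ B) (hb' : b' ∈ B) (hbb' : b * b' = 1) (hb'b : b' * b = 1)
    (hq : spectralRadius ℂ (b' * T) = 0) :
    IsUnit (b + T) ∧
      ∀ n : ℕ, 1 ≤ n →
        star (b' ^ n) * b' ^ n ≤
          E (star (Ring.inverse (b + T) ^ n) * Ring.inverse (b + T) ^ n) := by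
  classical
  obtain ⟨hmem, hfix, hbi, hpos, hcon⟩ := hE
  set q : A := b' * T with hqdef
  -- every element of the spectrum of q is zero
  have hspec0 : ∀ z : ℂ, z ∈ spectrum ℂ q → z = 0 := by
    intro z hz
    have h1 : (‖z‖₊ : ENNReal) ≤ spectralRadius ℂ q :=
      le_iSup₂ (f := fun k (_ : k ∈ spectrum ℂ q) => (‖k‖₊ : ENNReal)) z hz
    rw [hq] at h1
    simpa using h1
  -- 1 + q is a unit
  have hunit1q : IsUnit (1 + q) := by
    have hne : (-1 : ℂ) ∉ spectrum ℂ q := by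
      intro h
      have := hspec0 _ h
      norm_num at this
    have h2 := spectrum.notMem_iff.mp hne
    have h3 : (algebraMap ℂ A) (-1) - q = -(1 + q) := by
      rw [map_neg, map_one, neg_add, sub_eq_add_neg]
    rw [h3] at h2
    simpa using h2.neg
  have hbunit : IsUnit b := ⟨⟨b, b', hbb', hb'b⟩, rfl⟩
  have hZeq : b + T = b * (1 + q) := by
    rw [mul_add, mul_one, hqdef, ← mul_assoc, hbb', one_mul]
  have hZunit : IsUnit (b + T) := by
    rw [hZeq]; exact hbunit.mul hunit1q
  refine ⟨hZunit, ?_⟩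
  set w : A := Ring.inverse (b + T) with hwdef
  have hZw : (b + T) * w = 1 := Ring.mul_inverse_cancel _ hZunit
  have hwZ : w * (b + T) = 1 := Ring.inverse_mul_cancel _ hZunit
  -- ‖q ^ m‖ is eventually small
  have hqm : Tendsto (fun m : ℕ => ‖q ^ m‖) atTop (𝓝 0) := by
    have hgel := spectrum.pow_nnnorm_pow_one_div_tendsto_nhds_spectralRadius q
    rw [hq] at hgel
    have hev : ∀ᶠ m : ℕ in atTop, (‖q ^ m‖₊ : ENNReal) ^ (1 / (m : ℝ)) < 2⁻¹ :=
      hgel.eventually_lt_const (by norm_num)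
    have hle : ∀ᶠ m : ℕ in atTop, ‖q ^ m‖ ≤ (2⁻¹ : ℝ) ^ m := by
      filter_upwards [hev, eventually_ge_atTop 1] with m hm hm1
      have hm0 : (m : ℝ) ≠ 0 := by positivity
      have h1 : ((‖q ^ m‖₊ : ENNReal) ^ (1 / (m : ℝ))) ^ (m : ℝ) ≤
          (2⁻¹ : ENNReal) ^ (m : ℝ) := ENNReal.rpow_le_rpow hm.le (Nat.cast_nonneg m)
      rw [← ENNReal.rpow_mul, one_div, inv_mul_cancel₀ hm0, ENNReal.rpow_one] at h1
      have h2 : (‖q ^ m‖₊ : ENNReal) ≤ (((2⁻¹ : NNReal) ^ m : NNReal) : ENNReal) := by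
        refine h1.trans_eq ?_
        rw [ENNReal.rpow_natCast, ENNReal.coe_pow, ENNReal.coe_inv (by norm_num)]
        norm_num
      have h3 : ‖q ^ m‖₊ ≤ (2⁻¹ : NNReal) ^ m := by exact_mod_cast h2
      calc ‖q ^ m‖ = ((‖q ^ m‖₊ : NNReal) : ℝ) := rfl
        _ ≤ (((2⁻¹ : NNReal) ^ m : NNReal) : ℝ) := by exact_mod_cast h3
        _ = (2⁻¹ : ℝ) ^ m := by push_cast; ring
    have htend : Tendsto (fun m : ℕ => (2⁻¹ : ℝ) ^ m) atTop (𝓝 0) :=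
      tendsto_pow_atTop_nhds_zero_of_lt_one (by norm_num) (by norm_num)
    exact squeeze_zero' (Eventually.of_forall fun m => norm_nonneg _) hle htend
  have hnegqm : Tendsto (fun m : ℕ => (-q) ^ m) atTop (𝓝 0) := by
    have : ∀ m : ℕ, ‖(-q) ^ m‖ = ‖q ^ m‖ := by
      intro m
      rcases Nat.even_or_odd m with h | h
      · rw [h.neg_pow]
      · rw [h.neg_pow, norm_neg]
    exact squeeze_zero_norm (fun m => (this m).le) hqm
  -- partial sums of the Neumann series
  set S : ℕ → A := fun m => (∑ k ∈ Finset.range m, (-q) ^ k) * b' with hSdef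
  have hZS : ∀ m, (b + T) * S m = 1 - b * ((-q) ^ m * b') := by
    intro m
    have hgeo : (1 + q) * ∑ k ∈ Finset.range m, (-q) ^ k = 1 - (-q) ^ m := by
      have := mul_neg_geom_sum (-q) m
      rwa [sub_neg_eq_add] at this
    rw [hSdef]
    calc (b + T) * ((∑ k ∈ Finset.range m, (-q) ^ k) * b')
        = b * (((1 + q) * ∑ k ∈ Finset.range m, (-q) ^ k) * b') := by
          rw [hZeq]; simp only [mul_assoc]
      _ = b * ((1 - (-q) ^ m) * b') := by rw [hgeo]
      _ = 1 - b * ((-q) ^ m * b') := by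
          rw [sub_mul, one_mul, mul_sub, hbb']
  have hSw : ∀ m, S m = w - w * (b * ((-q) ^ m * b')) := by
    intro m
    have h := congrArg (fun x => w * x) (hZS m)
    have h : w * ((b + T) * S m) = w * (1 - b * ((-q) ^ m * b')) := h
    rw [← mul_assoc, hwZ, one_mul, mul_sub, mul_one] at h
    exact h
  have hStend : Tendsto S atTop (𝓝 w) := by
    have h1 : Tendsto (fun m : ℕ => w - w * (b * ((-q) ^ m * b'))) atTop
        (𝓝 (w - w * (b * (0 * b')))) := by
      exact tendsto_const_nhds.sub (tendsto_const_nhds.mul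
        (tendsto_const_nhds.mul (hnegqm.mul tendsto_const_nhds)))
    simp only [zero_mul, mul_zero, sub_zero] at h1
    exact Tendsto.congr (fun m => (hSw m).symm) h1
  -- the submodule of "degree ≥ 1" words
  set f : A → A := fun c => T * c with hfdef
  set G : Set A := {x | ∃ b₀ ∈ (B : Set A), ∃ l : List A,
    l ≠ [] ∧ (∀ c ∈ l, c ∈ B) ∧ x = b₀ * (l.map f).prod} with hGdef
  set D : Submodule ℂ A := Submodule.span ℂ G with hDdef
  have hED : ∀ x ∈ D, E x = 0 := by
    intro x hx
    have hle : D ≤ LinearMap.ker E := by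
      rw [hDdef, Submodule.span_le]
      rintro x ⟨b₀, hb₀, l, hl, hlB, rfl⟩
      exact LinearMap.mem_ker.mpr (hT b₀ hb₀ l hl hlB)
    exact LinearMap.mem_ker.mp (hle hx)
  have hGD : G ⊆ (D : Set A) := Submodule.subset_span
  -- closure under left multiplication by B
  have hDl : ∀ β ∈ B, ∀ x ∈ D, β * x ∈ D := by
    intro β hβ x hx
    induction hx using Submodule.span_induction with
    | mem y hy =>
      obtain ⟨b₀, hb₀, l, hl, hlB, rfl⟩ := hy
      exact hGD ⟨β * b₀, mul_mem hβ hb₀, l, hl, hlB, by rw [mul_assoc]⟩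
    | zero => simpa using D.zero_mem
    | add y z hy hz ihy ihz => simpa [mul_add] using D.add_mem ihy ihz
    | smul a y hy ihy => simpa [mul_smul_comm] using D.smul_mem a ihy
  -- closure under right multiplication by B
  have hDr : ∀ γ ∈ B, ∀ x ∈ D, x * γ ∈ D := by
    intro γ hγ x hx
    induction hx using Submodule.span_induction with
    | mem y hy =>
      obtain ⟨b₀, hb₀, l, hl, hlB, rfl⟩ := hy
      rcases List.eq_nil_or_concat l with rfl | ⟨l₁, c, hlc⟩
      · exact absurd rfl hl
      · rw [List.concat_eq_append] at hlc
        subst hlc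
        refine hGD ⟨b₀, hb₀, l₁ ++ [c * γ], by simp, ?_, ?_⟩
        · intro d hd
          rcases List.mem_append.mp hd with hd | hd
          · exact hlB d (List.mem_append.mpr (Or.inl hd))
          · simp only [List.mem_singleton] at hd
            subst hd
            exact mul_mem (hlB c (by simp)) hγ
        · simp only [List.map_append, List.prod_append, List.map_cons, List.map_nil,
            List.prod_cons, List.prod_nil, hfdef, mul_one, mul_assoc]
    | zero => simpa using D.zero_mem
    | add y z hy hz ihy ihz => simpa [add_mul] using D.add_mem ihy ihz
    | smul a y hy ihy => simpa [smul_mul_assoc] using D.smul_mem a ihy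
  -- closure under right multiplication by word-products
  have hDprod : ∀ l' : List A, l' ≠ [] → (∀ c ∈ l', c ∈ B) →
      ∀ x ∈ D, x * (l'.map f).prod ∈ D := by
    intro l' hl' hl'B x hx
    induction hx using Submodule.span_induction with
    | mem y hy =>
      obtain ⟨b₀, hb₀, l, hl, hlB, rfl⟩ := hy
      refine hGD ⟨b₀, hb₀, l ++ l', by simp [hl], ?_, ?_⟩
      · intro d hd
        rcases List.mem_append.mp hd with hd | hd
        · exact hlB d hd
        · exact hl'B d hd
      · rw [List.map_append, List.prod_append, mul_assoc]
    | zero => simpa using D.zero_mem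
    | add y z hy hz ihy ihz => simpa [add_mul] using D.add_mem ihy ihz
    | smul a y hy ihy => simpa [smul_mul_assoc] using D.smul_mem a ihy
  -- closure under multiplication of D with D
  have hDD : ∀ x ∈ D, ∀ y ∈ D, x * y ∈ D := by
    intro x hx y hy
    induction hy using Submodule.span_induction with
    | mem z hz =>
      obtain ⟨b₁, hb₁, l', hl', hl'B, rfl⟩ := hz
      rw [← mul_assoc]
      exact hDprod l' hl' hl'B _ (hDr b₁ hb₁ x hx)
    | zero => simpa using D.zero_mem
    | add y z hy hz ihy ihz => simpa [mul_add] using D.add_mem ihy ihz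
    | smul a y hy ihy => simpa [mul_smul_comm] using D.smul_mem a ihy
  -- q ^ k * b' as a word
  have hqkword : ∀ k : ℕ, q ^ k * b' = b' * ((List.replicate k b').map f).prod := by
    intro k
    induction k with
    | zero => simp
    | succ k ih =>
      rw [pow_succ', mul_assoc, ih, List.replicate_succ, List.map_cons, List.prod_cons]
      simp only [hqdef, hfdef, mul_assoc]
  have hqkD : ∀ k : ℕ, 1 ≤ k → q ^ k * b' ∈ D := by
    intro k hk
    rw [hqkword]
    have hrep : List.replicate k b' ≠ [] := by
      intro hnil
      have hlen := congrArg List.length hnil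
      simp at hlen
      omega
    exact hGD ⟨b', hb', List.replicate k b', hrep,
      fun c hc => by rw [List.eq_of_mem_replicate hc]; exact hb', rfl⟩
  have hnegqkD : ∀ k : ℕ, 1 ≤ k → (-q) ^ k * b' ∈ D := by
    intro k hk
    rcases Nat.even_or_odd k with h | h
    · rw [h.neg_pow]; exact hqkD k hk
    · rw [h.neg_pow, neg_mul]; exact D.neg_mem (hqkD k hk)
  -- S m = b' + (element of D)
  have hSmD : ∀ m : ℕ, 1 ≤ m → ∃ d ∈ D, S m = b' + d := by
    intro m hm
    obtain ⟨m', rfl⟩ : ∃ m'', m = m'' + 1 := ⟨m - 1, (Nat.succ_pred_eq_of_pos hm).symm⟩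
    refine ⟨∑ k ∈ Finset.range m', (-q) ^ (k + 1) * b',
      Submodule.sum_mem D fun k _ => hnegqkD (k + 1) (Nat.le_add_left 1 k), ?_⟩
    have hS2 : S (m' + 1) = ∑ k ∈ Finset.range (m' + 1), (-q) ^ k * b' :=
      Finset.sum_mul ..
    rw [hS2, Finset.sum_range_succ' (fun k => (-q) ^ k * b') m', add_comm, pow_zero, one_mul]
  -- powers of (β + d)
  have hpowBD : ∀ n : ℕ, ∀ β ∈ B, ∀ d ∈ D, ∃ e ∈ D, (β + d) ^ n = β ^ n + e := by
    intro n β hβ d hd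
    induction n with
    | zero => exact ⟨0, D.zero_mem, by simp⟩
    | succ n ih =>
      obtain ⟨e, he, hee⟩ := ih
      refine ⟨β ^ n * d + (e * β + e * d), ?_, ?_⟩
      · exact D.add_mem (hDl _ (pow_mem hβ n) d hd)
          (D.add_mem (hDr β hβ e he) (hDD e he d hd))
      · rw [pow_succ, hee, add_mul, mul_add, mul_add, ← pow_succ, add_assoc]
  -- E is continuous
  have hEcont : Continuous fun x : A => E x := by
    exact (E.mkContinuous 1 (fun x => by simpa using hcon x)).continuous
  -- the key identity
  have hkey : ∀ n : ℕ, 1 ≤ n → ∀ β ∈ B, ∀ γ ∈ B,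
      E (β * w ^ n * γ) = β * b' ^ n * γ := by
    intro n hn β hβ γ hγ
    have hconst : ∀ᶠ m : ℕ in atTop, E (β * S m ^ n * γ) = β * b' ^ n * γ := by
      filter_upwards [eventually_ge_atTop 1] with m hm
      obtain ⟨d, hd, hSm⟩ := hSmD m hm
      obtain ⟨e, he, hee⟩ := hpowBD n b' hb' d hd
      rw [hSm, hee, mul_add, add_mul, map_add]
      rw [hfix _ (mul_mem (mul_mem hβ (pow_mem hb' n)) hγ)]
      rw [hED _ (hDr γ hγ _ (hDl β hβ e he)), add_zero]
    have h1 : Tendsto (fun m => E (β * S m ^ n * γ)) atTop (𝓝 (E (β * w ^ n * γ))) := by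
      exact (hEcont.tendsto _).comp
        ((tendsto_const_nhds.mul (hStend.pow n)).mul tendsto_const_nhds)
    have h2 : Tendsto (fun m => E (β * S m ^ n * γ)) atTop (𝓝 (β * b' ^ n * γ)) :=
      tendsto_const_nhds.congr' (by filter_upwards [hconst] with m hm using hm.symm)
    exact tendsto_nhds_unique h1 h2
  -- E is star-preserving
  have hE1 : E 1 = 1 := hfix 1 B.one_mem
  have hsa : ∀ h : A, IsSelfAdjoint h → IsSelfAdjoint (E h) := by
    intro h hh
    have hple : -(algebraMap ℝ A ‖h‖) ≤ h := hh.neg_algebraMap_norm_le_self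
    have hp : (0 : A) ≤ h + algebraMap ℝ A ‖h‖ := by
      rw [← neg_add_cancel (algebraMap ℝ A ‖h‖)]
      exact add_le_add hple le_rfl
    have halg : algebraMap ℝ A ‖h‖ = ((‖h‖ : ℂ)) • (1 : A) := by
      rw [Algebra.algebraMap_eq_smul_one]
      norm_num
    have hEp : IsSelfAdjoint (E (h + algebraMap ℝ A ‖h‖)) :=
      (hpos _ hp).isSelfAdjoint
    have hEalg : E (algebraMap ℝ A ‖h‖) = algebraMap ℝ A ‖h‖ := by
      rw [halg, map_smul, hE1]
    have heq : E h = E (h + algebraMap ℝ A ‖h‖) - algebraMap ℝ A ‖h‖ := by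
      rw [map_add, hEalg, add_sub_cancel_right]
    rw [heq]
    refine hEp.sub ?_
    rw [halg]
    exact IsSelfAdjoint.smul (show star ((‖h‖ : ℂ)) = _ by
      rw [Complex.star_def, Complex.conj_ofReal]) (IsSelfAdjoint.one A)
  have hEstar : ∀ x : A, E (star x) = star (E x) := by
    intro x
    set h : A := (2 : ℂ)⁻¹ • (x + star x) with hh_def
    set k : A := (-Complex.I) • ((2 : ℂ)⁻¹ • (x - star x)) with hk_def
    have hhsa : IsSelfAdjoint h := by
      rw [hh_def]
      rw [IsSelfAdjoint, star_smul, star_add, star_star]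
      simp [Complex.star_def, map_inv₀, add_comm]
    have hksa : IsSelfAdjoint k := by
      rw [hk_def]
      rw [IsSelfAdjoint, star_smul, star_smul, star_sub, star_star]
      simp only [Complex.star_def, map_neg, Complex.conj_I, map_inv₀, map_ofNat, neg_neg]
      module
    have hx : x = h + Complex.I • k := by
      rw [hh_def, hk_def]
      have hI : Complex.I • ((-Complex.I) • ((2 : ℂ)⁻¹ • (x - star x)))
          = (2 : ℂ)⁻¹ • (x - star x) := by
        rw [smul_smul, smul_smul]
        rw [show Complex.I * -Complex.I * (2:ℂ)⁻¹ = (2:ℂ)⁻¹ by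
          rw [mul_neg, Complex.I_mul_I, neg_neg, one_mul]]
      rw [hI]
      module
    have hstarx : star x = h - Complex.I • k := by
      rw [hh_def, hk_def]
      have hI : Complex.I • ((-Complex.I) • ((2 : ℂ)⁻¹ • (x - star x)))
          = (2 : ℂ)⁻¹ • (x - star x) := by
        rw [smul_smul, smul_smul]
        rw [show Complex.I * -Complex.I * (2:ℂ)⁻¹ = (2:ℂ)⁻¹ by
          rw [mul_neg, Complex.I_mul_I, neg_neg, one_mul]]
      rw [hI]
      module
    have e1 : star (E h) = E h := hsa h hhsa
    have e2 : star (E k) = E k := hsa k hksa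
    calc E (star x) = E h - Complex.I • E k := by rw [hstarx, map_sub, map_smul, map_smul]
      _ = star (E h) - Complex.I • star (E k) := by rw [e1, e2]
      _ = star (E h + Complex.I • E k) := by
          rw [star_add, star_smul, Complex.star_def, Complex.conj_I, neg_smul,
            ← sub_eq_add_neg]
      _ = star (E x) := by rw [← map_smul, ← map_add, ← hx]
  -- final computation
  intro n hn
  set y : A := w ^ n with hy_def
  set u : A := b' ^ n with hu_def
  have hu_mem : u ∈ B := pow_mem hb' n
  have hEy : E y = u := by
    have := hkey n hn 1 B.one_mem 1 B.one_mem
    simpa using this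
  have hEuy : E (star u * y) = star u * u := by
    have h1 : E (star u * y * 1) = star u * E y * 1 := hbi _ (star_mem hu_mem) _ B.one_mem y
    rw [mul_one, mul_one] at h1
    rw [h1, hEy]
  have hEyu : E (star y * u) = star u * u := by
    have h1 : star (star u * y) = star y * u := by rw [star_mul, star_star]
    calc E (star y * u) = E (star (star u * y)) := by rw [h1]
      _ = star (E (star u * y)) := hEstar _
      _ = star (star u * u) := by rw [hEuy]
      _ = star u * u := by rw [star_mul, star_star]
  have hEuu : E (star u * u) = star u * u := hfix _ (mul_mem (star_mem hu_mem) hu_mem)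
  have hdecomp : star y * y =
      star (y - u) * (y - u) + (star u * y + (star y * u - star u * u)) := by
    rw [star_sub]
    noncomm_ring
  have hfinal : E (star y * y) = E (star (y - u) * (y - u)) + star u * u := by
    rw [hdecomp, map_add, map_add, map_sub, hEuy, hEyu, hEuu]
    abel
  have hposE : 0 ≤ E (star (y - u) * (y - u)) := hpos _ (star_mul_self_nonneg _)
  calc star (b' ^ n) * b' ^ n = star u * u := rfl
    _ ≤ E (star (y - u) * (y - u)) + star u * u := le_add_of_nonneg_left hposE
    _ = E (star y * y) := hfinal.symm
end

section
/- Let A be a unital C*-algebra, B ⊆ A a commutative unital C*-subalgebra, and E : A → B a conditional expectation onto B. Let T ∈ A satisfy E(b₀ T b₁ T b₂ ⋯ T b_p) = 0 for every p ≥ 1 and all b₀, b₁, …, b_p ∈ B. Let b ∈ B be invertible and suppose b^{-1} T is quasinilpotent, so that Z = b + T is invertible, and set Y₁ = Z^{-1} − b^{-1}. Then E(b₀ Y₁ b₁ Y₁ b₂ ⋯ Y₁ b_p) = 0 for every p ≥ 1 and all b₀, b₁, …, b_p ∈ B. -/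
open Filter

/-- Let `E` be a conditional expectation from a unital C*-algebra `A` onto a commutative unital
C*-subalgebra `B`, and let `T ∈ A` be such that `E(b₀ T b₁ T b₂ ⋯ T bₚ) = 0` for all `p ≥ 1`
and `b₀, …, bₚ ∈ B`.  Let `b ∈ B` be invertible, with inverse `b' ∈ B`, and suppose `b⁻¹ T` is
quasinilpotent (vanishing spectral radius), so that `Z = b + T` is invertible.  Setting
`Y₁ = Z⁻¹ − b⁻¹`, we have `E(b₀ Y₁ b₁ Y₁ b₂ ⋯ Y₁ bₚ) = 0` for all `p ≥ 1` and
`b₀, …, bₚ ∈ B`. -/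
theorem condexp_word_inverse_sub_eq_zero
    {A : Type*} [CStarAlgebra A] [PartialOrder A] [StarOrderedRing A]
    (B : StarSubalgebra ℂ A) (hBclosed : IsClosed (B : Set A))
    (hBcomm : ∀ x ∈ B, ∀ y ∈ B, x * y = y * x)
    (E : A →ₗ[ℂ] A) (hE : IsCondExp B E)
    (T : A)
    (hT : ∀ b₀ ∈ B, ∀ l : List A, l ≠ [] → (∀ c ∈ l, c ∈ B) →
      E (b₀ * (l.map (fun c => T * c)).prod) = 0)
    (b b' : A) (hb : b ∈ B) (hb' : b' ∈ B) (hbb' : b * b' = 1) (hb'b : b' * b = 1)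
    (hq : spectralRadius ℂ (b' * T) = 0)
    (Y₁ : A) (hY₁ : Y₁ = Ring.inverse (b + T) - b') :
    ∀ b₀ ∈ B, ∀ l : List A, l ≠ [] → (∀ c ∈ l, c ∈ B) →
      E (b₀ * (l.map (fun c => Y₁ * c)).prod) = 0 := by
  classical
  set q : A := b' * T with hqdef
  set G : Set A := {x | ∃ b₀ ∈ B, ∃ l : List A, l ≠ [] ∧ (∀ c ∈ l, c ∈ B) ∧
      x = b₀ * (l.map (fun c => T * c)).prod} with hGdef
  set S : Submodule ℂ A := Submodule.span ℂ G with hSdef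
  set K : Set A := closure (S : Set A) with hKdef
  -- E is continuous
  have hEcont : Continuous E :=
    AddMonoidHomClass.continuous_of_bound E 1 (fun x => by
      simpa using hE.contractive x)
  -- a lemma about absorbing a right factor into the last entry of a word
  have hconcat : ∀ (L : List A) (a d : A),
      ((L ++ [a]).map (fun c => T * c)).prod * d
        = ((L ++ [a * d]).map (fun c => T * c)).prod := by
    intro L a d
    simp [List.map_append, List.prod_append, mul_assoc]
  -- G is stable under right multiplication by B
  have hGmulB : ∀ x ∈ G, ∀ d ∈ B, x * d ∈ G := by
    rintro x ⟨b₀, hb₀, l, hl, hlB, rfl⟩ d hd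
    rcases l.eq_nil_or_concat' with rfl | ⟨L, a, rfl⟩
    · exact absurd rfl hl
    · refine ⟨b₀, hb₀, L ++ [a * d], by simp, ?_, ?_⟩
      · intro c hc
        rcases List.mem_append.1 hc with hc | hc
        · exact hlB c (List.mem_append.2 (Or.inl hc))
        · simp only [List.mem_singleton] at hc
          subst hc
          exact mul_mem (hlB a (by simp)) hd
      · rw [mul_assoc, ← hconcat]
  -- G is stable under left multiplication by B
  have hBmulG : ∀ d ∈ B, ∀ x ∈ G, d * x ∈ G := by
    rintro d hd x ⟨b₀, hb₀, l, hl, hlB, rfl⟩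
    exact ⟨d * b₀, mul_mem hd hb₀, l, hl, hlB, by rw [mul_assoc]⟩
  -- G is stable under multiplication
  have hGmulG : ∀ x ∈ G, ∀ y ∈ G, x * y ∈ G := by
    rintro x hx y ⟨b₀', hb₀', l₂, hl₂, hl₂B, rfl⟩
    obtain ⟨b₀, hb₀, l₁, hl₁, hl₁B, hx'⟩ := hGmulB x hx b₀' hb₀'
    refine ⟨b₀, hb₀, l₁ ++ l₂, by simp [hl₁], ?_, ?_⟩
    · intro c hc
      rcases List.mem_append.1 hc with hc | hc
      · exact hl₁B c hc
      · exact hl₂B c hc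
    · rw [← mul_assoc, hx']
      simp [List.map_append, List.prod_append, mul_assoc]
  -- S is stable under multiplication
  have hSmul : ∀ x ∈ S, ∀ y ∈ S, x * y ∈ S := by
    intro x hx y hy
    have h1 : S * S ≤ S := by
      rw [hSdef, Submodule.span_mul_span]
      refine Submodule.span_le.2 ?_
      rintro z ⟨a, ha, c, hc, rfl⟩
      exact Submodule.subset_span (hGmulG a ha c hc)
    exact h1 (Submodule.mul_mem_mul hx hy)
  -- S is stable under left/right multiplication by B
  have hBS : ∀ d ∈ B, ∀ x ∈ S, d * x ∈ S := by
    intro d hd x hx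
    refine Submodule.span_induction ?_ ?_ ?_ ?_ hx
    · intro g hg; exact Submodule.subset_span (hBmulG d hd g hg)
    · simp
    · intro a c _ _ ha hc; rw [mul_add]; exact add_mem ha hc
    · intro r a _ ha; rw [mul_smul_comm]; exact Submodule.smul_mem _ _ ha
  have hSB : ∀ x ∈ S, ∀ d ∈ B, x * d ∈ S := by
    intro x hx d hd
    refine Submodule.span_induction ?_ ?_ ?_ ?_ hx
    · intro g hg; exact Submodule.subset_span (hGmulB g hg d hd)
    · simp
    · intro a c _ _ ha hc; rw [add_mul]; exact add_mem ha hc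
    · intro r a _ ha; rw [smul_mul_assoc]; exact Submodule.smul_mem _ _ ha
  -- K facts
  have hKmul : ∀ x ∈ K, ∀ y ∈ K, x * y ∈ K := by
    have h1 : ∀ y ∈ (S : Set A), ∀ x ∈ K, x * y ∈ K := by
      intro y hy x hx
      exact map_mem_closure (f := fun z => z * y) (continuous_mul_right y) hx
        fun z hz => hSmul z hz y hy
    intro x hx y hy
    have : x * y ∈ closure K :=
      map_mem_closure (continuous_mul_left x) hy fun z hz => h1 z hz x hx
    rwa [hKdef, closure_closure] at this
  have hBK : ∀ d ∈ B, ∀ x ∈ K, d * x ∈ K := by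
    intro d hd x hx
    exact map_mem_closure (continuous_mul_left d) hx fun z hz => hBS d hd z hz
  have hKB : ∀ x ∈ K, ∀ d ∈ B, x * d ∈ K := by
    intro x hx d hd
    exact map_mem_closure (f := fun z => z * d) (continuous_mul_right d) hx
      fun z hz => hSB z hz d hd
  -- E vanishes on K
  have hEK : ∀ x ∈ K, E x = 0 := by
    have hker : S ≤ LinearMap.ker E := by
      refine Submodule.span_le.2 ?_
      rintro g ⟨b₀, hb₀, l, hl, hlB, rfl⟩
      exact hT b₀ hb₀ l hl hlB
    intro x hx
    have hclosed : IsClosed (E ⁻¹' {0} : Set A) :=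
      (isClosed_singleton).preimage hEcont
    have : x ∈ closure (E ⁻¹' {0} : Set A) :=
      closure_mono (fun z hz => hker hz) hx
    rwa [hclosed.closure_eq] at this
  -- powers of q
  have hpow : ∀ m : ℕ, q ^ m * b'
      = b' * ((List.replicate m b').map (fun c => T * c)).prod := by
    intro m
    induction m with
    | zero => simp
    | succ m ih =>
      rw [pow_succ', mul_assoc, ih, hqdef]
      simp [List.replicate_succ, mul_assoc]
  have hqG : ∀ m : ℕ, q ^ (m + 1) * b' ∈ G := by
    intro m
    exact ⟨b', hb', List.replicate (m + 1) b', by simp, by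
      intro c hc; rw [List.eq_of_mem_replicate hc]; exact hb', hpow (m + 1)⟩
  have hterm : ∀ m : ℕ, (-q) ^ (m + 1) * b' ∈ S := by
    intro m
    have h1 : (-q) ^ (m + 1) * b' = ((-1 : ℂ) ^ (m + 1)) • (q ^ (m + 1) * b') := by
      rw [← smul_mul_assoc, ← smul_pow]
      norm_num
    rw [h1]
    exact Submodule.smul_mem _ _ (Submodule.subset_span (hqG m))
  -- summability of the Neumann series
  have hrad : Filter.Tendsto (fun n : ℕ => (‖q ^ n‖₊ : ENNReal) ^ (1 / n : ℝ))
      atTop (nhds 0) := by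
    have := spectrum.pow_nnnorm_pow_one_div_tendsto_nhds_spectralRadius q
    rwa [hq] at this
  have hbound : ∀ᶠ n : ℕ in atTop, ‖q ^ n‖ ≤ (1 / 2 : ℝ) ^ n := by
    have h2 : (0 : ENNReal) < 1 / 2 := by norm_num
    filter_upwards [hrad.eventually_lt_const h2, Filter.eventually_ge_atTop 1]
      with n hn hn1
    have hne : (n : ℝ) ≠ 0 := by positivity
    have key : (‖q ^ n‖₊ : ENNReal) ≤ (1 / 2 : ENNReal) ^ n := by
      have : ((‖q ^ n‖₊ : ENNReal) ^ (1 / n : ℝ)) ^ (n : ℝ)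
          ≤ (1 / 2 : ENNReal) ^ (n : ℝ) :=
        ENNReal.rpow_le_rpow hn.le (by positivity)
      rwa [← ENNReal.rpow_mul, one_div, inv_mul_cancel₀ hne, ENNReal.rpow_one,
        ENNReal.rpow_natCast] at this
    have := ENNReal.toReal_mono (by simp [ENNReal.pow_ne_top]) key
    simpa [ENNReal.toReal_pow] using this
  have hsum : Summable (fun n : ℕ => (-q) ^ n) := by
    refine Summable.of_norm_bounded_eventually (g := fun n => (1 / 2 : ℝ) ^ n)
      (summable_geometric_of_lt_one (by norm_num) (by norm_num)) ?_
    rw [Nat.cofinite_eq_atTop]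
    filter_upwards [hbound] with n hn
    calc ‖(-q) ^ n‖ = ‖(-1 : ℂ) ^ n • q ^ n‖ := by
          rw [← smul_pow, neg_one_smul]
      _ = ‖q ^ n‖ := by rw [norm_smul]; simp
      _ ≤ (1 / 2 : ℝ) ^ n := hn
  set u : A := ∑' n : ℕ, (-q) ^ n with hudef
  have hpartial : Filter.Tendsto (fun N => ∑ n ∈ Finset.range N, (-q) ^ n)
      atTop (nhds u) := hsum.hasSum.tendsto_sum_nat
  have hqn0 : Filter.Tendsto (fun n : ℕ => (-q) ^ n) atTop (nhds 0) :=
    hsum.tendsto_atTop_zero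
  -- telescoping identities
  have hcommN : ∀ N : ℕ, (1 + q) * (-q) ^ N = (-q) ^ N * (1 + q) := by
    intro N
    exact (((Commute.one_left (-q)).add_left ((Commute.refl q).neg_right)).pow_right N).eq
  have htel : ∀ N, (∑ n ∈ Finset.range N, (-q) ^ n) * (1 + q) = 1 - (-q) ^ N := by
    intro N
    induction N with
    | zero => simp
    | succ N ih =>
      rw [Finset.sum_range_succ, add_mul, ih, pow_succ]
      noncomm_ring
  have htel' : ∀ N, (1 + q) * (∑ n ∈ Finset.range N, (-q) ^ n) = 1 - (-q) ^ N := by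
    intro N
    induction N with
    | zero => simp
    | succ N ih =>
      rw [Finset.sum_range_succ, mul_add, ih, hcommN, pow_succ]
      noncomm_ring
  -- u is the inverse of 1 + q
  have hu1 : u * (1 + q) = 1 := by
    refine tendsto_nhds_unique
      (hpartial.mul (tendsto_const_nhds (x := 1 + q))) ?_
    have : Filter.Tendsto (fun N : ℕ => 1 - (-q) ^ N) atTop (nhds 1) := by
      simpa using (tendsto_const_nhds (x := (1 : A))).sub hqn0
    refine this.congr fun N => (htel N).symm
  have h1u : (1 + q) * u = 1 := by
    refine tendsto_nhds_unique
      ((tendsto_const_nhds (x := 1 + q)).mul hpartial) ?_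
    have : Filter.Tendsto (fun N : ℕ => 1 - (-q) ^ N) atTop (nhds 1) := by
      simpa using (tendsto_const_nhds (x := (1 : A))).sub hqn0
    refine this.congr fun N => (htel' N).symm
  -- the inverse of b + T
  have hZ : b + T = b * (1 + q) := by
    rw [hqdef, mul_add, mul_one, ← mul_assoc, hbb', one_mul]
  have hv1 : (b + T) * (u * b') = 1 := by
    rw [hZ, mul_assoc, ← mul_assoc (1 + q), h1u, one_mul, hbb']
  have h1v : (u * b') * (b + T) = 1 := by
    rw [hZ, mul_assoc, ← mul_assoc b' b, hb'b, one_mul, hu1]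
  have hinv : Ring.inverse (b + T) = u * b' := by
    have := Ring.inverse_unit ⟨b + T, u * b', hv1, h1v⟩
    simpa using this
  have hY₁' : Y₁ = (u - 1) * b' := by
    rw [hY₁, hinv, sub_mul, one_mul]
  -- Y₁ is in K
  have hYK : Y₁ ∈ K := by
    set f : ℕ → A := fun N => ∑ n ∈ Finset.range N, ((-q) ^ (n + 1) * b') with hfdef
    have hfS : ∀ N, f N ∈ S := fun N => Submodule.sum_mem _ fun n _ => hterm n
    have hfval : ∀ N, f N = (∑ n ∈ Finset.range (N + 1), (-q) ^ n - 1) * b' := by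
      intro N
      rw [Finset.sum_range_succ' (fun n => (-q) ^ n) N]
      simp [hfdef, Finset.sum_mul]
    have hf_tendsto : Filter.Tendsto f atTop (nhds Y₁) := by
      rw [hY₁']
      have h1 : Filter.Tendsto (fun N : ℕ => ∑ n ∈ Finset.range (N + 1), (-q) ^ n)
          atTop (nhds u) := hpartial.comp (Filter.tendsto_add_atTop_nat 1)
      have h2 : Filter.Tendsto (fun N : ℕ =>
          (∑ n ∈ Finset.range (N + 1), (-q) ^ n - 1) * b') atTop (nhds ((u - 1) * b')) :=
        (h1.sub tendsto_const_nhds).mul tendsto_const_nhds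
      exact h2.congr fun N => (hfval N).symm
    exact mem_closure_of_tendsto hf_tendsto (Filter.Eventually.of_forall hfS)
  -- the main claim: words in Y₁ lie in K
  have hword : ∀ l : List A, l ≠ [] → (∀ c ∈ l, c ∈ B) → ∀ b₀ ∈ B,
      b₀ * (l.map (fun c => Y₁ * c)).prod ∈ K := by
    intro l
    induction l with
    | nil => intro h; exact absurd rfl h
    | cons c l' ih =>
      intro _ hlB b₀ hb₀
      have hc : c ∈ B := hlB c (by simp)
      rcases eq_or_ne l' [] with rfl | hl'
      · simp only [List.map_cons, List.map_nil, List.prod_cons, List.prod_nil, mul_one]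
        rw [← mul_assoc]
        exact hKB _ (hBK b₀ hb₀ Y₁ hYK) c hc
      · have hrest : (1 : A) * (l'.map (fun c => Y₁ * c)).prod ∈ K :=
          ih hl' (fun d hd => hlB d (by simp [hd])) 1 (one_mem B)
        rw [one_mul] at hrest
        have hhead : b₀ * Y₁ * c ∈ K := hKB _ (hBK b₀ hb₀ Y₁ hYK) c hc
        have := hKmul _ hhead _ hrest
        simpa [List.map_cons, List.prod_cons, mul_assoc] using this
  intro b₀ hb₀ l hl hlB
  exact hEK _ (hword l hl hlB b₀ hb₀)
end

section
/- Let M be a unital C*-algebra, p ∈ M a projection (self-adjoint idempotent), and q = 1 − p. Let Z₁, Z₂, C, W ∈ M satisfy Z₁ = p Z₁ p, C = p C q, Z₂ = q Z₂ q, W = q W q, and Z₂ W = W Z₂ = q (so W is the inverse of Z₂ in the corner algebra q M q). Suppose (limsup_{k→∞} ‖Z₁^k‖^{1/k}) · (limsup_{k→∞} ‖W^k‖^{1/k}) < 1. Then the series Y = Σ_{k=0}^∞ Z₁^k C W^{k+1} converges in norm, the element S = 1 + Y is invertible with S^{-1} = 1 − Y, and S (Z₁ + Z₂) S^{-1} =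 Z₁ + C + Z₂. -/
open Filter

/-- Let `M` be a unital C*-algebra, `p ∈ M` a projection, `q = 1 - p`, and let
`Z₁ = p Z₁ p`, `C = p C q`, `Z₂ = q Z₂ q`, with `W = q W q` the inverse of `Z₂` in the corner
`q M q`.  If the product of the spectral-radius-type quantities
`limsup ‖Z₁^k‖^{1/k}` and `limsup ‖W^k‖^{1/k}` is `< 1`, then the series
`Y = ∑_{k=0}^∞ Z₁^k C W^{k+1}` converges in norm, `S = 1 + Y` is invertible with inverse
`1 - Y`, and `S (Z₁ + Z₂) S⁻¹ = Z₁ + C + Z₂`. -/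
theorem exists_similarity_of_corner_data
    {M : Type*} [CStarAlgebra M]
    (p : M) (hp_sa : star p = p) (hp_idem : p * p = p)
    (Z₁ Z₂ C W : M)
    (hZ₁ : Z₁ = p * Z₁ * p)
    (hC : C = p * C * (1 - p))
    (hZ₂ : Z₂ = (1 - p) * Z₂ * (1 - p))
    (hW : W = (1 - p) * W * (1 - p))
    (hZ₂W : Z₂ * W = 1 - p) (hWZ₂ : W * Z₂ = 1 - p)
    (hrad : (limsup (fun k : ℕ => ‖Z₁ ^ k‖ ^ ((1 : ℝ) / k)) atTop) *
        (limsup (fun k : ℕ => ‖W ^ k‖ ^ ((1 : ℝ) / k)) atTop) < 1) :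
    ∃ Y : M,
      Tendsto (fun n : ℕ => ∑ k ∈ Finset.range n, Z₁ ^ k * C * W ^ (k + 1)) atTop (nhds Y) ∧
      (1 + Y) * (1 - Y) = 1 ∧ (1 - Y) * (1 + Y) = 1 ∧
      (1 + Y) * (Z₁ + Z₂) * (1 - Y) = Z₁ + C + Z₂ := by
  set q : M := 1 - p with hq
  -- basic projection algebra
  have hqq : q * q = q := by
    simp only [hq, mul_sub, sub_mul, one_mul, mul_one, hp_idem]; abel
  have hqp : q * p = 0 := by simp [hq, sub_mul, hp_idem]
  have hpq : p * q = 0 := by simp [hq, mul_sub, hp_idem]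
  -- corner facts
  have hpZ₁ : p * Z₁ = Z₁ := by
    conv_lhs => rw [hZ₁]
    rw [← mul_assoc, ← mul_assoc, hp_idem, ← hZ₁]
  have hpC : p * C = C := by
    conv_lhs => rw [hC]
    rw [← mul_assoc, ← mul_assoc, hp_idem, ← hC]
  have hCq : C * q = C := by
    conv_lhs => rw [hC]
    rw [mul_assoc, hqq, ← hC]
  have hZ₂q : Z₂ * q = Z₂ := by
    conv_lhs => rw [hZ₂]
    rw [mul_assoc, hqq, ← hZ₂]
  have hZ₂p : Z₂ * p = 0 := by
    conv_lhs => rw [hZ₂]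
    rw [mul_assoc, hqp, mul_zero]
  have hCp : C * p = 0 := by
    conv_lhs => rw [hC]
    rw [mul_assoc, hqp, mul_zero]
  have hWq : W * q = W := by
    conv_lhs => rw [hW]
    rw [mul_assoc, hqq, ← hW]
  -- power corner facts
  have hCWkq : ∀ k : ℕ, C * (W ^ k * q) = C * W ^ k := by
    intro k
    cases k with
    | zero => simp [hCq]
    | succ n => rw [pow_succ, mul_assoc, hWq]
  have hpZ₁kC : ∀ k : ℕ, p * (Z₁ ^ k * C) = Z₁ ^ k * C := by
    intro k
    cases k with
    | zero => simp [hpC]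
    | succ n => rw [pow_succ', mul_assoc Z₁, ← mul_assoc, hpZ₁]
  -- limsup bounds
  have hbdd : ∀ (A : M), IsBoundedUnder (· ≤ ·) atTop
      (fun k : ℕ => ‖A ^ k‖ ^ ((1 : ℝ) / k)) := by
    intro A
    refine isBoundedUnder_of ⟨max ‖A‖ 1, fun k => ?_⟩
    rcases Nat.eq_zero_or_pos k with hk | hk
    · simp only [hk, Nat.cast_zero, div_zero, Real.rpow_zero]
      exact le_max_right _ _
    · have h1 : ‖A ^ k‖ ^ ((1 : ℝ) / k) ≤ (‖A‖ ^ k) ^ ((1 : ℝ) / k) :=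
        Real.rpow_le_rpow (norm_nonneg _) (norm_pow_le' A hk) (by positivity)
      have h2 : (‖A‖ ^ k) ^ ((1 : ℝ) / k) = ‖A‖ := by
        rw [one_div]
        exact Real.pow_rpow_inv_natCast (norm_nonneg _) hk.ne'
      exact le_trans h1 (le_trans (le_of_eq h2) (le_max_left _ _))
  have hnn : ∀ (A : M), (0:ℝ) ≤ limsup (fun k : ℕ => ‖A ^ k‖ ^ ((1 : ℝ) / k)) atTop := by
    intro A
    refine le_limsup_of_frequently_le ?_ (hbdd A)
    exact Eventually.frequently (Eventually.of_forall fun k => Real.rpow_nonneg (norm_nonneg _) _)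
  have hL₁0 : 0 ≤ limsup (fun k : ℕ => ‖Z₁ ^ k‖ ^ ((1 : ℝ) / k)) atTop := hnn Z₁
  have hL₂0 : 0 ≤ limsup (fun k : ℕ => ‖W ^ k‖ ^ ((1 : ℝ) / k)) atTop := hnn W
  -- choose r₁, r₂
  obtain ⟨r₁, r₂, hr₁0, hr₂0, hr, hgt₁, hgt₂⟩ :
      ∃ r₁ r₂ : ℝ, 0 < r₁ ∧ 0 < r₂ ∧ r₁ * r₂ < 1 ∧
        limsup (fun k : ℕ => ‖Z₁ ^ k‖ ^ ((1 : ℝ) / k)) atTop < r₁ ∧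
        limsup (fun k : ℕ => ‖W ^ k‖ ^ ((1 : ℝ) / k)) atTop < r₂ := by
    set L₁ := limsup (fun k : ℕ => ‖Z₁ ^ k‖ ^ ((1 : ℝ) / k)) atTop
    set L₂ := limsup (fun k : ℕ => ‖W ^ k‖ ^ ((1 : ℝ) / k)) atTop
    set e : ℝ := min 1 ((1 - L₁ * L₂) / (L₁ + L₂ + 2)) with he
    have he1 : e ≤ 1 := min_le_left _ _
    have he2 : e ≤ (1 - L₁ * L₂) / (L₁ + L₂ + 2) := min_le_right _ _
    have he0 : 0 < e := by
      apply lt_min one_pos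
      apply div_pos (by linarith) (by linarith)
    have h3 : e * (L₁ + L₂ + 2) ≤ 1 - L₁ * L₂ := by
      rw [← le_div_iff₀ (by linarith : (0:ℝ) < L₁ + L₂ + 2)]; exact he2
    exact ⟨L₁ + e, L₂ + e, by linarith, by linarith, by nlinarith,
      by linarith, by linarith⟩
  have hev₁ : ∀ᶠ k : ℕ in atTop, ‖Z₁ ^ k‖ ^ ((1 : ℝ) / k) < r₁ :=
    eventually_lt_of_limsup_lt hgt₁ (hbdd Z₁)
  have hev₂ : ∀ᶠ k : ℕ in atTop, ‖W ^ k‖ ^ ((1 : ℝ) / k) < r₂ :=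
    eventually_lt_of_limsup_lt hgt₂ (hbdd W)
  have hnorm : ∀ (A : M) (r : ℝ) (k : ℕ), 0 < k → ‖A ^ k‖ ^ ((1:ℝ)/k) < r →
      ‖A ^ k‖ ≤ r ^ k := by
    intro A r k hk h
    have h0 : (0:ℝ) ≤ ‖A ^ k‖ ^ ((1:ℝ)/k) := Real.rpow_nonneg (norm_nonneg _) _
    calc ‖A ^ k‖ = (‖A ^ k‖ ^ ((1:ℝ)/k)) ^ k := by
          rw [one_div, Real.rpow_inv_natCast_pow (norm_nonneg _) hk.ne']
      _ ≤ r ^ k := pow_le_pow_left₀ h0 h.le k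
  -- summability
  set f : ℕ → M := fun k => Z₁ ^ k * C * W ^ (k + 1) with hf
  have hsum : Summable f := by
    obtain ⟨N₁, hN₁⟩ := eventually_atTop.mp hev₁
    obtain ⟨N₂, hN₂⟩ := eventually_atTop.mp hev₂
    have hg : Summable (fun k : ℕ => (‖C‖ * r₂) * (r₁ * r₂) ^ k) :=
      (summable_geometric_of_lt_one (by positivity) hr).mul_left _
    refine hg.of_norm_bounded_eventually_nat ?_
    filter_upwards [eventually_ge_atTop (max (max N₁ N₂) 1)] with k hk
    have hk1 : 1 ≤ k := le_trans (le_max_right _ _) hk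
    have hkN₁ : N₁ ≤ k := le_trans (le_trans (le_max_left _ _) (le_max_left _ _)) hk
    have hkN₂ : N₂ ≤ k + 1 :=
      le_trans (le_trans (le_trans (le_max_right _ _) (le_max_left _ _)) hk) (Nat.le_succ k)
    have hb₁ : ‖Z₁ ^ k‖ ≤ r₁ ^ k := hnorm Z₁ r₁ k hk1 (hN₁ k hkN₁)
    have hb₂ : ‖W ^ (k+1)‖ ≤ r₂ ^ (k+1) := hnorm W r₂ (k+1) (Nat.succ_pos k) (hN₂ _ hkN₂)
    calc ‖f k‖ ≤ ‖Z₁ ^ k * C‖ * ‖W ^ (k+1)‖ := norm_mul_le _ _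
      _ ≤ ‖Z₁ ^ k‖ * ‖C‖ * ‖W ^ (k+1)‖ := by
          gcongr
          exact norm_mul_le _ _
      _ ≤ r₁ ^ k * ‖C‖ * r₂ ^ (k+1) := by
          have hC0 : (0:ℝ) ≤ ‖C‖ := norm_nonneg _
          have := mul_le_mul (mul_le_mul hb₁ le_rfl hC0 (pow_nonneg hr₁0.le k)) hb₂
            (norm_nonneg _) (by positivity)
          exact this
      _ = (‖C‖ * r₂) * (r₁ * r₂) ^ k := by rw [mul_pow]; ring
  set Y : M := ∑' k, f k with hY
  have hHS : HasSum f Y := hsum.hasSum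
  -- structural identities for Y
  have hYq : Y * q = Y := by
    have h1 : (∑' k, f k * q) = Y * q := hsum.tsum_mul_right q
    have h2 : ∀ k, f k * q = f k := by
      intro k
      simp only [hf]
      rw [mul_assoc, mul_assoc, hCWkq (k+1), ← mul_assoc]
    rw [← h1, tsum_congr h2]
  have hpY : p * Y = Y := by
    have h1 : (∑' k, p * f k) = p * Y := (hHS.mul_left p).tsum_eq
    have h2 : ∀ k, p * f k = f k := by
      intro k
      simp only [hf]
      rw [← mul_assoc, hpZ₁kC k]
    rw [← h1, tsum_congr h2]
  have hYZ₂ : Y * Z₂ = C + Z₁ * Y := by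
    have h1 : (∑' k, f k * Z₂) = Y * Z₂ := hsum.tsum_mul_right Z₂
    have h2 : ∀ k, f k * Z₂ = Z₁ ^ k * C * W ^ k := by
      intro k
      simp only [hf]
      simp only [mul_assoc, pow_succ]
      rw [hWZ₂, hCWkq k]
    have hg' : Summable (fun k => Z₁ ^ k * C * W ^ k) := by
      have := hsum.mul_right Z₂
      rwa [show (fun k => f k * Z₂) = fun k => Z₁ ^ k * C * W ^ k from funext h2] at this
    have h3 : (∑' k, Z₁ ^ k * C * W ^ k)
        = Z₁ ^ 0 * C * W ^ 0 + ∑' k, Z₁ ^ (k+1) * C * W ^ (k+1) :=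
      hg'.tsum_eq_zero_add
    have h4 : ∀ k : ℕ, Z₁ ^ (k+1) * C * W ^ (k+1) = Z₁ * f k := by
      intro k
      simp only [hf]
      rw [pow_succ', mul_assoc Z₁, mul_assoc Z₁]
    have h5 : (∑' k, Z₁ * f k) = Z₁ * Y := (hHS.mul_left Z₁).tsum_eq
    rw [← h1, tsum_congr h2, h3, tsum_congr h4, h5]
    simp
  have hYp : Y * p = 0 := by
    calc Y * p = (Y * q) * p := by rw [hYq]
      _ = Y * (q * p) := mul_assoc _ _ _
      _ = 0 := by rw [hqp, mul_zero]
  have hYZ₁ : Y * Z₁ = 0 := by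
    calc Y * Z₁ = Y * (p * Z₁) := by rw [hpZ₁]
      _ = (Y * p) * Z₁ := (mul_assoc _ _ _).symm
      _ = 0 := by rw [hYp, zero_mul]
  have hZ₂Y : Z₂ * Y = 0 := by
    calc Z₂ * Y = Z₂ * (p * Y) := by rw [hpY]
      _ = (Z₂ * p) * Y := (mul_assoc _ _ _).symm
      _ = 0 := by rw [hZ₂p, zero_mul]
  have hCY : C * Y = 0 := by
    calc C * Y = C * (p * Y) := by rw [hpY]
      _ = (C * p) * Y := (mul_assoc _ _ _).symm
      _ = 0 := by rw [hCp, zero_mul]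
  have hYY : Y * Y = 0 := by
    calc Y * Y = Y * (p * Y) := by rw [hpY]
      _ = (Y * p) * Y := (mul_assoc _ _ _).symm
      _ = 0 := by rw [hYp, zero_mul]
  refine ⟨Y, hHS.tendsto_sum_nat, ?_, ?_, ?_⟩
  · have h8 : (1 + Y) * (1 - Y) = 1 - Y * Y := by noncomm_ring
    rw [h8, hYY, sub_zero]
  · have h8 : (1 - Y) * (1 + Y) = 1 - Y * Y := by noncomm_ring
    rw [h8, hYY, sub_zero]
  · have expand : (1 + Y) * (Z₁ + Z₂) * (1 - Y)
        = Z₁ + Z₂ + Y * Z₁ + Y * Z₂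
          - (Z₁ * Y + Z₂ * Y + Y * Z₁ * Y + Y * Z₂ * Y) := by
      noncomm_ring
    have h6 : (C + Z₁ * Y) * Y = 0 := by
      rw [add_mul, hCY, mul_assoc, hYY, mul_zero, add_zero]
    rw [expand, hYZ₁, hYZ₂, hZ₂Y, h6]
    simp only [zero_mul, add_zero, zero_add, mul_zero]
    abel
end

section
/- Let ν be a finite Borel measure on ℝ and x₀ ∈ ℝ, and suppose lim_{δ→0⁺} ν((x₀−δ, x₀+δ) \ {x₀})/δ = ∞. Then for every N > 0 and every ε₀ > 0 there exist ε ∈ (0, ε₀) and real numbers r', s' with x₀ − ε < r' < s' < x₀ + ε such that ν([x₀−ε, r']) > 0, ν([s', x₀+ε]) > 0, and ν([x₀−ε, r']) + ν([s', x₀+ε]) > N·ε. -/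
open Filter MeasureTheory

/-- Auxiliary: punctured neighborhoods of `x₀` have arbitrarily small measure. -/
lemma aux_small_punctured (ν : Measure ℝ) [IsFiniteMeasure ν] (x₀ : ℝ) {q d : ℝ}
    (hq : 0 < q) (hd : 0 < d) :
    ∃ t : ℝ, 0 < t ∧ t < d ∧ (ν (Set.Ioo (x₀ - t) (x₀ + t) \ {x₀})).toReal < q := by
  set s : ℕ → Set ℝ := fun n => Set.Ioo (x₀ - d / (n + 2)) (x₀ + d / (n + 2)) \ {x₀} with hs
  have hmeas : ∀ n, NullMeasurableSet (s n) ν :=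
    fun n => (measurableSet_Ioo.diff (measurableSet_singleton _)).nullMeasurableSet
  have hanti : Antitone s := by
    intro a b hab
    have h2 : d / (b + 2 : ℝ) ≤ d / (a + 2 : ℝ) := by
      have hab' : (a : ℝ) ≤ (b : ℝ) := Nat.cast_le.mpr hab
      gcongr
    exact Set.diff_subset_diff_left (Set.Ioo_subset_Ioo (by linarith) (by linarith))
  have hinter : (⋂ n, s n) = ∅ := by
    ext y
    simp only [Set.mem_iInter, Set.mem_empty_iff_false, iff_false]
    intro h
    obtain ⟨h1, h2⟩ := h 0
    have hy : y ≠ x₀ := by simpa using h2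
    have hpos : 0 < |y - x₀| := abs_pos.mpr (sub_ne_zero.mpr hy)
    obtain ⟨n, hn⟩ := exists_nat_gt (d / |y - x₀|)
    obtain ⟨hn1, _⟩ := h n
    have hlt : |y - x₀| < d / (n + 2) := by
      rw [abs_sub_lt_iff]
      constructor <;> [linarith [hn1.1, hn1.2]; linarith [hn1.1, hn1.2]]
    have : d / ((n : ℝ) + 2) < |y - x₀| := by
      rw [div_lt_iff₀ (by positivity)]
      have := (div_lt_iff₀ hpos).mp hn
      nlinarith [hpos]
    linarith
  have htend : Tendsto (ν ∘ s) atTop (nhds (ν (⋂ n, s n))) :=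
    tendsto_measure_iInter_atTop hmeas hanti ⟨0, measure_ne_top ν _⟩
  rw [hinter, measure_empty] at htend
  have hev : ∀ᶠ n in atTop, (ν ∘ s) n < ENNReal.ofReal q :=
    htend.eventually_lt_const (by simp [hq])
  obtain ⟨n, hn⟩ := hev.exists
  refine ⟨d / (n + 2), by positivity, ?_, ?_⟩
  · rw [div_lt_iff₀ (by positivity)]
    nlinarith [hd, Nat.cast_nonneg (α := ℝ) n]
  · exact (ENNReal.lt_ofReal_iff_toReal_lt (measure_ne_top ν _)).mp hn

/-- Let `ν` be a finite Borel measure on `ℝ` and `x₀ ∈ ℝ` with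
`ν((x₀ − δ, x₀ + δ) \ {x₀}) / δ → ∞` as `δ → 0⁺`.  Then for every `N > 0` and `ε₀ > 0`
there are `ε ∈ (0, ε₀)` and `x₀ − ε < r' < s' < x₀ + ε` such that the closed intervals
`[x₀ − ε, r']` and `[s', x₀ + ε]` both have positive measure and their measures add up
to more than `N ε`. -/
theorem exists_split_of_blowup
    (ν : Measure ℝ) [IsFiniteMeasure ν] (x₀ : ℝ)
    (hblow : Tendsto (fun δ : ℝ => (ν (Set.Ioo (x₀ - δ) (x₀ + δ) \ {x₀})).toReal / δ)
      (nhdsWithin 0 (Set.Ioi 0)) atTop)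
    (N : ℝ) (hN : 0 < N) (ε₀ : ℝ) (hε₀ : 0 < ε₀) :
    ∃ ε : ℝ, 0 < ε ∧ ε < ε₀ ∧ ∃ r' s' : ℝ,
      x₀ - ε < r' ∧ r' < s' ∧ s' < x₀ + ε ∧
      0 < ν (Set.Icc (x₀ - ε) r') ∧ 0 < ν (Set.Icc s' (x₀ + ε)) ∧
      N * ε < (ν (Set.Icc (x₀ - ε) r')).toReal + (ν (Set.Icc s' (x₀ + ε))).toReal := by
  -- get a threshold a₀ below which the ratio exceeds N + 1
  have hev : ∀ᶠ δ in nhdsWithin 0 (Set.Ioi 0),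
      N + 1 < (ν (Set.Ioo (x₀ - δ) (x₀ + δ) \ {x₀})).toReal / δ :=
    hblow.eventually_gt_atTop (N + 1)
  rw [eventually_iff, mem_nhdsGT_iff_exists_Ioo_subset] at hev
  obtain ⟨a₀, ha₀, hsub⟩ := hev
  have ha₀' : 0 < a₀ := ha₀
  -- our ε
  set ε : ℝ := min a₀ ε₀ / 2 with hε
  have hε_pos : 0 < ε := by positivity
  have hε_lt_ε₀ : ε < ε₀ := by
    have : min a₀ ε₀ ≤ ε₀ := min_le_right _ _
    simp only [hε]; linarith
  have hε_lt_a₀ : ε < a₀ := by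
    have : min a₀ ε₀ ≤ a₀ := min_le_left _ _
    simp only [hε]; linarith
  -- the punctured ball of radius δ is positive for δ ∈ (0, a₀)
  have hpos_punct : ∀ δ : ℝ, 0 < δ → δ < a₀ → 0 < ν (Set.Ioo (x₀ - δ) (x₀ + δ) \ {x₀}) := by
    intro δ h1 h2
    have h0 := hsub ⟨h1, h2⟩
    simp only [Set.mem_setOf_eq] at h0
    have h3 : 0 < (ν (Set.Ioo (x₀ - δ) (x₀ + δ) \ {x₀})).toReal / δ := by linarith
    have h4 : 0 < (ν (Set.Ioo (x₀ - δ) (x₀ + δ) \ {x₀})).toReal := by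
      by_contra h
      push_neg at h
      rw [div_pos_iff] at h3
      rcases h3 with ⟨h5, _⟩ | ⟨_, h6⟩ <;> linarith
    exact pos_iff_ne_zero.mpr (fun h0 => by simp [h0] at h4)
  -- m := measure of punctured ε-ball
  set P : ℝ → Set ℝ := fun t => Set.Ioo (x₀ - t) (x₀ + t) \ {x₀} with hP
  set m : ℝ := (ν (P ε)).toReal with hm
  have hm_big : N + 1 < m / ε := hsub ⟨hε_pos, hε_lt_a₀⟩
  have hm_gt : (N + 1) * ε < m := by
    rw [lt_div_iff₀ hε_pos] at hm_big; linarith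
  -- left and right masses
  set L : ℝ := (ν (Set.Ico (x₀ - ε) x₀)).toReal with hL
  set R : ℝ := (ν (Set.Ioc x₀ (x₀ + ε))).toReal with hR
  have hLR : m ≤ L + R := by
    have hsub2 : P ε ⊆ Set.Ico (x₀ - ε) x₀ ∪ Set.Ioc x₀ (x₀ + ε) := by
      rintro y ⟨⟨h1, h2⟩, h3⟩
      simp only [Set.mem_singleton_iff] at h3
      rcases lt_or_gt_of_ne h3 with h | h
      · exact Or.inl ⟨le_of_lt h1, h⟩
      · exact Or.inr ⟨h, le_of_lt h2⟩
    have := (measure_mono (μ := ν) hsub2).trans (measure_union_le _ _)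
    calc m ≤ ((ν (Set.Ico (x₀ - ε) x₀)) + (ν (Set.Ioc x₀ (x₀ + ε)))).toReal :=
            ENNReal.toReal_mono (by finiteness) this
      _ = L + R := ENNReal.toReal_add (measure_ne_top ν _) (measure_ne_top ν _)
  have hm_pos : 0 < m := by nlinarith
  have hLRpos : 0 < L ∨ 0 < R := by
    by_contra h
    push_neg at h
    have hL0 : L ≤ 0 := h.1
    have hR0 : R ≤ 0 := h.2
    linarith
  -- a generic sum estimate, proved for both cases below
  refine ⟨ε, hε_pos, hε_lt_ε₀, ?_⟩
  rcases hLRpos with hLpos | hRpos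
  · -- mass on the left of x₀: split just left of x₀
    obtain ⟨t, ht_pos, ht_lt, ht_small⟩ :=
      aux_small_punctured ν x₀ (lt_min (show (0:ℝ) < m - N * ε by nlinarith) hLpos) hε_pos
    have hsmall1 : (ν (P t)).toReal < m - N * ε := lt_of_lt_of_le ht_small (min_le_left _ _)
    have hsmall2 : (ν (P t)).toReal < L := lt_of_lt_of_le ht_small (min_le_right _ _)
    refine ⟨x₀ - t, x₀ - t / 2, by linarith, by linarith, by linarith, ?_, ?_, ?_⟩
    · -- left piece positive
      have hsub2 : Set.Ico (x₀ - ε) x₀ ⊆ Set.Icc (x₀ - ε) (x₀ - t) ∪ P t := by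
        rintro y ⟨h1, h2⟩
        rcases le_or_gt y (x₀ - t) with h | h
        · exact Or.inl ⟨h1, h⟩
        · exact Or.inr ⟨⟨h, by linarith⟩, by simp; linarith⟩
      have hLle : L ≤ (ν (Set.Icc (x₀ - ε) (x₀ - t))).toReal + (ν (P t)).toReal := by
        have := (measure_mono (μ := ν) hsub2).trans (measure_union_le _ _)
        calc L ≤ ((ν (Set.Icc (x₀ - ε) (x₀ - t))) + (ν (P t))).toReal :=
              ENNReal.toReal_mono (by finiteness) this
          _ = _ := ENNReal.toReal_add (measure_ne_top ν _) (measure_ne_top ν _)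
      have : 0 < (ν (Set.Icc (x₀ - ε) (x₀ - t))).toReal := by linarith
      exact pos_iff_ne_zero.mpr (fun h0 => by simp [h0] at this)
    · -- right piece positive: contains P (t/2)
      have hsub2 : P (t / 2) ⊆ Set.Icc (x₀ - t / 2) (x₀ + ε) := by
        rintro y ⟨⟨h1, h2⟩, _⟩
        exact ⟨le_of_lt h1, by linarith⟩
      exact lt_of_lt_of_le (hpos_punct (t / 2) (by linarith) (by linarith)) (measure_mono (μ := ν) hsub2)
    · -- sum estimate
      have hsub2 : P ε ⊆ Set.Icc (x₀ - ε) (x₀ - t) ∪ Set.Icc (x₀ - t / 2) (x₀ + ε) ∪ P t := by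
        rintro y ⟨⟨h1, h2⟩, h3⟩
        rcases le_or_gt y (x₀ - t) with h | h
        · exact Or.inl (Or.inl ⟨le_of_lt h1, h⟩)
        rcases le_or_gt (x₀ - t / 2) y with h' | h'
        · exact Or.inl (Or.inr ⟨h', le_of_lt h2⟩)
        · exact Or.inr ⟨⟨h, by linarith⟩, h3⟩
      have hmle : m ≤ (ν (Set.Icc (x₀ - ε) (x₀ - t))).toReal
          + (ν (Set.Icc (x₀ - t / 2) (x₀ + ε))).toReal + (ν (P t)).toReal := by
        have h1 := (measure_mono (μ := ν) hsub2).trans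
          ((measure_union_le _ _).trans (add_le_add_left (measure_union_le _ _) _))
        calc m ≤ ((ν (Set.Icc (x₀ - ε) (x₀ - t))) + (ν (Set.Icc (x₀ - t / 2) (x₀ + ε)))
              + (ν (P t))).toReal := ENNReal.toReal_mono (by finiteness) h1
          _ = _ := by
            rw [ENNReal.toReal_add (by finiteness) (measure_ne_top ν _),
              ENNReal.toReal_add (measure_ne_top ν _) (measure_ne_top ν _)]
      linarith
  · -- mass on the right of x₀: split just right of x₀
    obtain ⟨t, ht_pos, ht_lt, ht_small⟩ :=
      aux_small_punctured ν x₀ (lt_min (show (0:ℝ) < m - N * ε by nlinarith) hRpos) hε_pos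
    have hsmall1 : (ν (P t)).toReal < m - N * ε := lt_of_lt_of_le ht_small (min_le_left _ _)
    have hsmall2 : (ν (P t)).toReal < R := lt_of_lt_of_le ht_small (min_le_right _ _)
    refine ⟨x₀ + t / 2, x₀ + t, by linarith, by linarith, by linarith, ?_, ?_, ?_⟩
    · -- left piece positive: contains P (t/2)
      have hsub2 : P (t / 2) ⊆ Set.Icc (x₀ - ε) (x₀ + t / 2) := by
        rintro y ⟨⟨h1, h2⟩, _⟩
        exact ⟨by linarith, le_of_lt h2⟩
      exact lt_of_lt_of_le (hpos_punct (t / 2) (by linarith) (by linarith)) (measure_mono (μ := ν) hsub2)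
    · -- right piece positive
      have hsub2 : Set.Ioc x₀ (x₀ + ε) ⊆ Set.Icc (x₀ + t) (x₀ + ε) ∪ P t := by
        rintro y ⟨h1, h2⟩
        rcases le_or_gt (x₀ + t) y with h | h
        · exact Or.inl ⟨h, h2⟩
        · exact Or.inr ⟨⟨by linarith, h⟩, by simp; linarith⟩
      have hRle : R ≤ (ν (Set.Icc (x₀ + t) (x₀ + ε))).toReal + (ν (P t)).toReal := by
        have := (measure_mono (μ := ν) hsub2).trans (measure_union_le _ _)
        calc R ≤ ((ν (Set.Icc (x₀ + t) (x₀ + ε))) + (ν (P t))).toReal :=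
              ENNReal.toReal_mono (by finiteness) this
          _ = _ := ENNReal.toReal_add (measure_ne_top ν _) (measure_ne_top ν _)
      have : 0 < (ν (Set.Icc (x₀ + t) (x₀ + ε))).toReal := by linarith
      exact pos_iff_ne_zero.mpr (fun h0 => by simp [h0] at this)
    · -- sum estimate
      have hsub2 : P ε ⊆ Set.Icc (x₀ - ε) (x₀ + t / 2) ∪ Set.Icc (x₀ + t) (x₀ + ε) ∪ P t := by
        rintro y ⟨⟨h1, h2⟩, h3⟩
        rcases le_or_gt y (x₀ + t / 2) with h | h
        · exact Or.inl (Or.inl ⟨le_of_lt h1, h⟩)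
        rcases le_or_gt (x₀ + t) y with h' | h'
        · exact Or.inl (Or.inr ⟨h', le_of_lt h2⟩)
        · exact Or.inr ⟨⟨by linarith, h'⟩, h3⟩
      have hmle : m ≤ (ν (Set.Icc (x₀ - ε) (x₀ + t / 2))).toReal
          + (ν (Set.Icc (x₀ + t) (x₀ + ε))).toReal + (ν (P t)).toReal := by
        have h1 := (measure_mono (μ := ν) hsub2).trans
          ((measure_union_le _ _).trans (add_le_add_left (measure_union_le _ _) _))
        calc m ≤ ((ν (Set.Icc (x₀ - ε) (x₀ + t / 2))) + (ν (Set.Icc (x₀ + t) (x₀ + ε)))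
              + (ν (P t))).toReal := ENNReal.toReal_mono (by finiteness) h1
          _ = _ := by
            rw [ENNReal.toReal_add (by finiteness) (measure_ne_top ν _),
              ENNReal.toReal_add (measure_ne_top ν _) (measure_ne_top ν _)]
      linarith
end

section
/- Let a ∈ ℝ and let (w_n)_{n≥1} be a sequence of nonnegative reals with Σ_{n=1}^∞ w_n < ∞. Let ν = Σ_{n=1}^∞ w_n δ_{a + 1/n} be the corresponding finite Borel measure on ℝ (where δ_x is the Dirac point mass at x). If lim_{n→∞} n · Σ_{k=n}^∞ w_k = ∞, then lim_{δ→0⁺} ν((a−δ, a+δ) \ {a})/δ = ∞. -/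
open Filter MeasureTheory

/-- Let `a ∈ ℝ` and let `(wₙ)_{n ≥ 1}` be nonnegative reals with `∑ wₙ < ∞`, and let
`ν = ∑_{n ≥ 1} wₙ δ_{a + 1/n}` be the corresponding finite Borel measure on `ℝ`.
If `n ∑_{k=n}^∞ w_k → ∞`, then `ν((a − δ, a + δ) \ {a}) / δ → ∞` as `δ → 0⁺`. -/
theorem blowup_of_dirac_sum
    (a : ℝ) (w : ℕ → ℝ) (hw : ∀ n, 0 ≤ w n) (hsum : Summable w)
    (ν : Measure ℝ)
    (hν : ν = Measure.sum
      (fun n : ℕ => ENNReal.ofReal (w (n + 1)) • Measure.dirac (a + 1 / ((n : ℝ) + 1))))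
    (hlim : Tendsto (fun n : ℕ => (n : ℝ) * ∑' k : ℕ, w (n + k)) atTop atTop) :
    Tendsto (fun δ : ℝ => (ν (Set.Ioo (a - δ) (a + δ) \ {a})).toReal / δ)
      (nhdsWithin 0 (Set.Ioi 0)) atTop := by
  set T : ℕ → ℝ := fun m => ∑' k : ℕ, w (m + k) with hT
  have hTsum : ∀ m, Summable (fun k => w (m + k)) := fun m => by
    simpa [add_comm] using (summable_nat_add_iff m).mpr hsum
  have hT0 : ∀ m, 0 ≤ T m := fun m => tsum_nonneg (fun k => hw _)
  rw [tendsto_atTop]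
  intro C
  set C' := max C 0 with hC'
  have hC'0 : 0 ≤ C' := le_max_right _ _
  obtain ⟨M, hM⟩ := eventually_atTop.mp (hlim.eventually_ge_atTop (3 * C'))
  set M' : ℕ := max M 2 with hM'
  have hM'pos : (0:ℝ) < (M' : ℝ) := by
    have : 0 < M' := by omega
    exact_mod_cast this
  filter_upwards [Ioo_mem_nhdsGT_of_mem
    (show (0:ℝ) ∈ Set.Ico (0:ℝ) (1/(M':ℝ)) from ⟨le_refl _, by positivity⟩)] with δ hδ
  obtain ⟨hδ0, hδ1⟩ := hδ
  set N : ℕ := ⌈1/δ⌉₊ with hNdef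
  have hδinv : (0:ℝ) < 1/δ := by positivity
  have hNge : 1/δ ≤ (N:ℝ) := Nat.le_ceil _
  have hNlt : (N:ℝ) < 1/δ + 1 := Nat.ceil_lt_add_one hδinv.le
  have hM'N : (M':ℝ) < N := by
    have h1 : (M':ℝ) < 1/δ := by
      have := one_div_lt_one_div_of_lt hδ0 hδ1
      rwa [one_div_one_div] at this
    linarith
  have hM'Nnat : M' < N := by exact_mod_cast hM'N
  have hN3 : (3:ℝ) ≤ (N:ℝ) := by
    have : 3 ≤ N := by omega
    exact_mod_cast this
  set S : Set ℝ := Set.Ioo (a - δ) (a + δ) \ {a} with hSdef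
  have hS : MeasurableSet S := measurableSet_Ioo.diff (measurableSet_singleton a)
  have hmem : ∀ n : ℕ, N ≤ n → a + 1 / ((n:ℝ) + 1) ∈ S := by
    intro n hn
    have hpos : (0:ℝ) < 1 / ((n:ℝ) + 1) := by positivity
    have hcast : (N:ℝ) ≤ (n:ℝ) := by exact_mod_cast hn
    have hgt : 1/δ < (n:ℝ) + 1 := by linarith
    have hlt : 1 / ((n:ℝ) + 1) < δ := by
      have := one_div_lt_one_div_of_lt hδinv hgt
      rwa [one_div_one_div] at this
    exact ⟨⟨by linarith, by linarith⟩, by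
      simp only [Set.mem_singleton_iff]
      intro h; linarith [hpos, (by linarith : a + 1/((n:ℝ)+1) = a)]⟩
  have hν_eq : ν S = ∑' n : ℕ, ENNReal.ofReal (w (n+1)) *
      S.indicator 1 (a + 1/((n:ℝ)+1)) := by
    rw [hν, Measure.sum_apply _ hS]
    congr 1
    ext n
    rw [Measure.smul_apply, smul_eq_mul, Measure.dirac_apply' _ hS]
  have hofT : ENNReal.ofReal (T (N+1)) = ∑' k : ℕ, ENNReal.ofReal (w (N+1+k)) :=
    ENNReal.ofReal_tsum_of_nonneg (fun k => hw _) (hTsum (N+1))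
  have hlow : ENNReal.ofReal (T (N+1)) ≤ ν S := by
    rw [hν_eq, hofT]
    calc ∑' k : ℕ, ENNReal.ofReal (w (N+1+k))
        = ∑' k : ℕ, ENNReal.ofReal (w ((k+N)+1)) *
            S.indicator 1 (a + 1/(((k+N:ℕ):ℝ)+1)) := by
          congr 1
          ext k
          rw [Set.indicator_of_mem (hmem (k+N) (by omega)), Pi.one_apply, mul_one]
          congr 2
          omega
      _ ≤ ∑' n : ℕ, ENNReal.ofReal (w (n+1)) * S.indicator 1 (a + 1/((n:ℝ)+1)) :=
          ENNReal.tsum_comp_le_tsum_of_injective (add_left_injective N) _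
  have htop : ν S ≠ ⊤ := by
    rw [hν_eq]
    have hle : ∑' n : ℕ, ENNReal.ofReal (w (n+1)) * S.indicator 1 (a + 1/((n:ℝ)+1))
        ≤ ∑' n : ℕ, ENNReal.ofReal (w (n+1)) := by
      refine ENNReal.tsum_le_tsum (fun n => ?_)
      have hind : S.indicator (1 : ℝ → ENNReal) (a + 1/((n:ℝ)+1)) ≤ 1 := by
        classical
        rw [Set.indicator_apply]
        split <;> simp
      calc ENNReal.ofReal (w (n+1)) * S.indicator 1 (a + 1/((n:ℝ)+1))
          ≤ ENNReal.ofReal (w (n+1)) * 1 := mul_le_mul_right hind _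
        _ = ENNReal.ofReal (w (n+1)) := mul_one _
    refine ne_top_of_le_ne_top ?_ hle
    rw [← ENNReal.ofReal_tsum_of_nonneg (fun n => hw _) ((summable_nat_add_iff 1).mpr hsum)]
    exact ENNReal.ofReal_ne_top
  have hTle : T (N+1) ≤ (ν S).toReal := by
    have := ENNReal.toReal_mono htop hlow
    rwa [ENNReal.toReal_ofReal (hT0 _)] at this
  have hMain : 3 * C' ≤ ((N:ℝ)+1) * T (N+1) := by
    have := hM (N+1) (by omega)
    push_cast at this
    linarith
  have key : C' ≤ T (N+1) * ((N:ℝ)-1) := by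
    nlinarith [hT0 (N+1), mul_nonneg (hT0 (N+1)) (show (0:ℝ) ≤ (N:ℝ) - 2 by linarith)]
  calc C ≤ C' := le_max_left _ _
    _ ≤ T (N+1) * ((N:ℝ)-1) := key
    _ ≤ T (N+1) * (1/δ) := mul_le_mul_of_nonneg_left (by linarith) (hT0 _)
    _ = T (N+1) / δ := by ring
    _ ≤ (ν S).toReal / δ := by gcongr
end
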